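/- arXiv:2312.00368 — 2 statements merged into one kernel-verified Lean document; each statement's English description precedes it below -/
import Mathlib

section
/- Let H be a connected linear k-uniform hypergraph on n vertices (n, k ≥ 3) with no Berge-B_s and no Berge-K_{2,t}, where s ≥ 2 and 1 ≤ t ≤ (6k²-15k+10)(s-1)/2 + 1. Then the spectral radius of the adjacency tensor of H satisfies ρ(H) ≤ √( (6k²-15k+10)(s-1)(n-1) / (2(k-1)²) ). -/
attribute [local instance] Classical.propDecidable

/-- `lam` is an eigenvalue of the order-`k`, dimension-`n` tensor `A`:
there is a nonzero `x` with `Σ a_{i i_2 … i_k} x_{i_2} ⋯ x_{i_k} = lam·x_i^{k-1}`. -/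
def IsTensorEigenvalue (n k : ℕ) (A : Fin n → (Fin (k - 1) → Fin n) → ℂ)
    (lam : ℂ) : Prop :=
  ∃ x : Fin n → ℂ, x ≠ 0 ∧
    ∀ i, (∑ p : Fin (k - 1) → Fin n, A i p * ∏ m, x (p m)) = lam * x i ^ (k - 1)

/-- The spectral radius of a tensor: the largest modulus of its eigenvalues. -/
noncomputable def specRad (n k : ℕ) (A : Fin n → (Fin (k - 1) → Fin n) → ℂ) : ℝ :=
  sSup {r : ℝ | ∃ lam : ℂ, IsTensorEigenvalue n k A lam ∧ ‖lam‖ = r}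

/-- The adjacency tensor of a `k`-uniform hypergraph: entry `1/(k-1)!` whenever the
index tuple forms an edge, and `0` otherwise. -/
noncomputable def adjT (n k : ℕ) (E : Finset (Finset (Fin n))) :
    Fin n → (Fin (k - 1) → Fin n) → ℂ := fun i p =>
  if insert i (Finset.image p Finset.univ) ∈ E then
    (1 : ℂ) / (Nat.factorial (k - 1)) else 0

/-- `H` contains no Berge-`B_s`, where `B_s` is the book of `s` triangles sharing a
common edge `{a,b}`: there do not exist distinct vertices `a, b, c_1, …, c_s` and
`2s+1` distinct hyperedges `e₀ ⊇ {a,b}`, `f i ⊇ {a, c i}`, `g i ⊇ {b, c i}`. -/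
def BergeBookFree {V : Type*} (E : Finset (Finset V)) (s : ℕ) : Prop :=
  ¬ ∃ (a b : V) (c : Fin s → V) (e₀ : Finset V) (f g : Fin s → Finset V),
      a ≠ b ∧ Function.Injective c ∧ (∀ i, c i ≠ a ∧ c i ≠ b) ∧
      e₀ ∈ E ∧ a ∈ e₀ ∧ b ∈ e₀ ∧
      (∀ i, f i ∈ E ∧ a ∈ f i ∧ c i ∈ f i) ∧
      (∀ i, g i ∈ E ∧ b ∈ g i ∧ c i ∈ g i) ∧
      Function.Injective f ∧ Function.Injective g ∧
      (∀ i j, f i ≠ g j) ∧ (∀ i, e₀ ≠ f i ∧ e₀ ≠ g i)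

/-- `H` contains no Berge-`K_{2,t}`: there do not exist distinct vertices
`a, b, c_1, …, c_t` and `2t` distinct hyperedges `f i ⊇ {a, c i}`,
`g i ⊇ {b, c i}`. -/
def BergeK2tFree {V : Type*} (E : Finset (Finset V)) (t : ℕ) : Prop :=
  ¬ ∃ (a b : V) (c : Fin t → V) (f g : Fin t → Finset V),
      a ≠ b ∧ Function.Injective c ∧ (∀ i, c i ≠ a ∧ c i ≠ b) ∧
      (∀ i, f i ∈ E ∧ a ∈ f i ∧ c i ∈ f i) ∧
      (∀ i, g i ∈ E ∧ b ∈ g i ∧ c i ∈ g i) ∧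
      Function.Injective f ∧ Function.Injective g ∧
      (∀ i j, f i ≠ g j)

set_option linter.unusedSectionVars false
set_option maxHeartbeats 1600000

namespace SRB
variable {n : ℕ}

/-- the unique edge through two vertices (junk value if not unique/existing) -/
noncomputable def edg (E : Finset (Finset (Fin n))) (a b : Fin n) : Finset (Fin n) :=
  (E.filter (fun e => a ∈ e ∧ b ∈ e)).sup id

lemma edg_eq {E : Finset (Finset (Fin n))}
    (hlin : ∀ e ∈ E, ∀ f ∈ E, e ≠ f → (e ∩ f).card ≤ 1)
    {a b : Fin n} (hab : a ≠ b) {e : Finset (Fin n)} (he : e ∈ E) (ha : a ∈ e) (hb : b ∈ e) :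
    edg E a b = e := by
  have hfil : E.filter (fun f => a ∈ f ∧ b ∈ f) = {e} := by
    apply Finset.eq_singleton_iff_unique_mem.mpr
    constructor
    · simp only [Finset.mem_filter]; exact ⟨he, ha, hb⟩
    · intro f hf
      rw [Finset.mem_filter] at hf
      by_contra hne
      have h2 : ({a, b} : Finset (Fin n)) ⊆ f ∩ e := by
        intro z hz
        rw [Finset.mem_insert, Finset.mem_singleton] at hz
        rcases hz with rfl | rfl
        · exact Finset.mem_inter.mpr ⟨hf.2.1, ha⟩
        · exact Finset.mem_inter.mpr ⟨hf.2.2, hb⟩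
      have hcard := Finset.card_le_card h2
      rw [Finset.card_pair hab] at hcard
      have := hlin f hf.1 e he hne
      omega
  rw [edg, hfil, Finset.sup_singleton, id]

/-- a maximal "rainbow" subset exists -/
lemma exists_rainbow {α β γ : Type*} [DecidableEq α] (P : Finset α) (ee : α → β) (ff : α → γ) :
    ∃ S, S ⊆ P ∧ Set.InjOn ee S ∧ Set.InjOn ff S ∧
      ∀ p ∈ P, ∃ j ∈ S, ee p = ee j ∨ ff p = ff j := by
  classical
  set F : Finset (Finset α) := P.powerset.filter (fun S => Set.InjOn ee ↑S ∧ Set.InjOn ff ↑S)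
    with hF
  have hne : F.Nonempty := by
    refine ⟨∅, ?_⟩
    simp [hF, Set.InjOn]
  obtain ⟨S, hSF, hmax⟩ := F.exists_maximal hne
  rw [hF, Finset.mem_filter, Finset.mem_powerset] at hSF
  refine ⟨S, hSF.1, hSF.2.1, hSF.2.2, ?_⟩
  intro p hp
  by_cases hpS : p ∈ S
  · exact ⟨p, hpS, Or.inl rfl⟩
  by_contra hcon
  push_neg at hcon
  refine hpS (hmax (y := insert p S) (?_ : insert p S ∈ F) (Finset.subset_insert p S) (Finset.mem_insert_self p S))
  rw [hF, Finset.mem_filter, Finset.mem_powerset]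
  refine ⟨Finset.insert_subset hp hSF.1, ?_, ?_⟩
  · rw [Finset.coe_insert, Set.injOn_insert (by exact_mod_cast hpS)]
    refine ⟨hSF.2.1, ?_⟩
    rintro ⟨j, hjS, hje⟩
    exact (hcon j (by exact_mod_cast hjS)).1 hje.symm
  · rw [Finset.coe_insert, Set.injOn_insert (by exact_mod_cast hpS)]
    refine ⟨hSF.2.2, ?_⟩
    rintro ⟨j, hjS, hje⟩
    exact (hcon j (by exact_mod_cast hjS)).2 hje.symm



lemma two_mul_sub_le (a : ℕ) : 2 * (a - 1) ≤ a * (a - 1) := by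
  rcases Nat.lt_or_ge a 2 with h | h
  · interval_cases a <;> simp
  · exact Nat.mul_le_mul_right _ h

lemma blocks_le {α δ : Type*} [DecidableEq α] (P : Finset α) (S : Finset α)
    (gg : α → δ) (hgg : Set.InjOn gg ↑S) (OD : Finset (α × α))
    (hOD : ∀ pq : α × α, pq.1 ∈ P → pq.2 ∈ P → pq.1 ≠ pq.2 → gg pq.1 = gg pq.2 → pq ∈ OD) :
    (∑ j ∈ S, ((P.filter (fun p => gg p = gg j)).card *
      ((P.filter (fun p => gg p = gg j)).card - 1)))
      ≤ OD.card := by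
  classical
  set Fg : α → Finset α := fun j => P.filter (fun p => gg p = gg j) with hFg
  have hdisj : (↑S : Set α).PairwiseDisjoint (fun j => (Fg j).offDiag) := by
    intro j hj j' hj' hne
    apply Finset.disjoint_left.mpr
    intro pq hpq hpq'
    have h1 := (Finset.mem_offDiag.mp hpq).1
    have h2 := (Finset.mem_offDiag.mp hpq').1
    rw [hFg, Finset.mem_filter] at h1 h2
    exact hne (hgg hj hj' (h1.2.symm.trans h2.2))
  have hsub : S.biUnion (fun j => (Fg j).offDiag) ⊆ OD := by
    intro pq hpq
    rw [Finset.mem_biUnion] at hpq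
    obtain ⟨j, hjS, hpq⟩ := hpq
    rw [Finset.mem_offDiag] at hpq
    obtain ⟨h1, h2, h3⟩ := hpq
    rw [hFg, Finset.mem_filter] at h1 h2
    exact hOD pq h1.1 h2.1 h3 (h1.2.trans h2.2.symm)
  calc ∑ j ∈ S, ((Fg j).card * ((Fg j).card - 1))
      = ∑ j ∈ S, ((Fg j).offDiag).card := by
        apply Finset.sum_congr rfl
        intro j _
        rw [Finset.offDiag_card, ← Nat.pred_eq_sub_one, Nat.mul_pred]
    _ = (S.biUnion (fun j => (Fg j).offDiag)).card := (Finset.card_biUnion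
          (fun j hj j' hj' hne => hdisj hj hj' hne)).symm
    _ ≤ _ := Finset.card_le_card hsub

/-- cardinality bound from a rainbow cover -/
lemma two_mul_card_le {α β γ : Type*} [DecidableEq α]
    (P : Finset α) (ee : α → β) (ff : α → γ) (S : Finset α) (hSP : S ⊆ P)
    (hee : Set.InjOn ee ↑S) (hff : Set.InjOn ff ↑S)
    (hcov : ∀ p ∈ P, ∃ j ∈ S, ee p = ee j ∨ ff p = ff j)
    (OPe OPf : Finset (α × α))
    (hOPe : ∀ pq : α × α, pq.1 ∈ P → pq.2 ∈ P → pq.1 ≠ pq.2 → ee pq.1 = ee pq.2 → pq ∈ OPe)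
    (hOPf : ∀ pq : α × α, pq.1 ∈ P → pq.2 ∈ P → pq.1 ≠ pq.2 → ff pq.1 = ff pq.2 → pq ∈ OPf) :
    2 * P.card ≤ 2 * S.card + OPe.card + OPf.card := by
  classical
  set Fe : α → Finset α := fun j => P.filter (fun p => ee p = ee j) with hFe
  set Ff : α → Finset α := fun j => P.filter (fun p => ff p = ff j) with hFf
  have hmemFe : ∀ j ∈ S, j ∈ Fe j := fun j hj => Finset.mem_filter.mpr ⟨hSP hj, rfl⟩
  have hmemFf : ∀ j ∈ S, j ∈ Ff j := fun j hj => Finset.mem_filter.mpr ⟨hSP hj, rfl⟩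
  -- step 1 : cover bound
  have hcover : P ⊆ S.biUnion (fun j => insert j (((Fe j).erase j) ∪ ((Ff j).erase j))) := by
    intro p hp
    obtain ⟨j, hjS, hcase⟩ := hcov p hp
    rw [Finset.mem_biUnion]
    refine ⟨j, hjS, ?_⟩
    rw [Finset.mem_insert]
    by_cases hpj : p = j
    · exact Or.inl hpj
    · refine Or.inr (Finset.mem_union.mpr ?_)
      rcases hcase with h | h
      · exact Or.inl (Finset.mem_erase.mpr ⟨hpj, Finset.mem_filter.mpr ⟨hp, h⟩⟩)
      · exact Or.inr (Finset.mem_erase.mpr ⟨hpj, Finset.mem_filter.mpr ⟨hp, h⟩⟩)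
  have hstep1 : P.card ≤ S.card + (∑ j ∈ S, ((Fe j).card - 1)) + (∑ j ∈ S, ((Ff j).card - 1)) := by
    calc P.card ≤ (S.biUnion (fun j => insert j (((Fe j).erase j) ∪ ((Ff j).erase j)))).card :=
          Finset.card_le_card hcover
      _ ≤ ∑ j ∈ S, (insert j (((Fe j).erase j) ∪ ((Ff j).erase j))).card :=
          Finset.card_biUnion_le
      _ ≤ ∑ j ∈ S, (1 + ((Fe j).card - 1) + ((Ff j).card - 1)) := by
          apply Finset.sum_le_sum
          intro j hj
          calc (insert j (((Fe j).erase j) ∪ ((Ff j).erase j))).card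
              ≤ (((Fe j).erase j) ∪ ((Ff j).erase j)).card + 1 := Finset.card_insert_le _ _
            _ ≤ (((Fe j).erase j).card + ((Ff j).erase j).card) + 1 := by
                have := Finset.card_union_le ((Fe j).erase j) ((Ff j).erase j)
                omega
            _ = 1 + ((Fe j).card - 1) + ((Ff j).card - 1) := by
                rw [Finset.card_erase_of_mem (hmemFe j hj), Finset.card_erase_of_mem (hmemFf j hj)]
                omega
      _ = S.card + (∑ j ∈ S, ((Fe j).card - 1)) + (∑ j ∈ S, ((Ff j).card - 1)) := by
          rw [Finset.sum_add_distrib, Finset.sum_add_distrib, Finset.sum_const, smul_eq_mul,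
            mul_one]
  have he2 := blocks_le P S ee hee OPe hOPe
  have hf2 := blocks_le P S ff hff OPf hOPf
  have he3 := le_trans (Finset.sum_le_sum (fun j (_ : j ∈ S) => two_mul_sub_le ((P.filter (fun p => ee p = ee j)).card))) he2
  have hf3 := le_trans (Finset.sum_le_sum (fun j (_ : j ∈ S) => two_mul_sub_le ((P.filter (fun p => ff p = ff j)).card))) hf2
  have he4 : 2 * (∑ j ∈ S, ((Fe j).card - 1)) ≤ OPe.card := by
    rw [Finset.mul_sum]
    exact he3
  have hf4 : 2 * (∑ j ∈ S, ((Ff j).card - 1)) ≤ OPf.card := by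
    rw [Finset.mul_sum]
    exact hf3
  omega

variable {V : Type*} [DecidableEq V]

lemma book_bound {E : Finset (Finset V)} {s : ℕ} (hB : BergeBookFree E s)
    {a b : V} (hab : a ≠ b) {e₀ : Finset V} (he₀ : e₀ ∈ E) (ha : a ∈ e₀) (hb : b ∈ e₀)
    (W : Finset V) (F G : V → Finset V)
    (hprop : ∀ w ∈ W, w ≠ a ∧ w ≠ b ∧ F w ∈ E ∧ a ∈ F w ∧ w ∈ F w ∧
        G w ∈ E ∧ b ∈ G w ∧ w ∈ G w ∧ e₀ ≠ F w ∧ e₀ ≠ G w)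
    (hFinj : Set.InjOn F ↑W) (hGinj : Set.InjOn G ↑W)
    (hFG : ∀ w ∈ W, ∀ w' ∈ W, F w ≠ G w') :
    W.card ≤ s - 1 := by
  by_contra hcon
  push_neg at hcon
  have hsW : s ≤ W.card := by omega
  obtain ⟨W', hW'W, hW'card⟩ := Finset.exists_subset_card_eq hsW
  let eqv : W' ≃ Fin s := Finset.equivFinOfCardEq hW'card
  let c : Fin s → V := fun i => ((eqv.symm i : W') : V)
  have hcW : ∀ i, c i ∈ W := fun i => hW'W (eqv.symm i).2
  have hcinj : Function.Injective c := by
    intro i j h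
    have : eqv.symm i = eqv.symm j := Subtype.ext h
    exact eqv.symm.injective this
  apply hB
  refine ⟨a, b, c, e₀, F ∘ c, G ∘ c, hab, hcinj,
    fun i => ⟨(hprop _ (hcW i)).1, (hprop _ (hcW i)).2.1⟩, he₀, ha, hb,
    fun i => ⟨(hprop _ (hcW i)).2.2.1, (hprop _ (hcW i)).2.2.2.1, (hprop _ (hcW i)).2.2.2.2.1⟩,
    fun i => ⟨(hprop _ (hcW i)).2.2.2.2.2.1, (hprop _ (hcW i)).2.2.2.2.2.2.1,
      (hprop _ (hcW i)).2.2.2.2.2.2.2.1⟩,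
    fun i j h => hcinj (hFinj (Finset.mem_coe.mpr (hcW i)) (Finset.mem_coe.mpr (hcW j)) h),
    fun i j h => hcinj (hGinj (Finset.mem_coe.mpr (hcW i)) (Finset.mem_coe.mpr (hcW j)) h),
    fun i j => hFG _ (hcW i) _ (hcW j),
    fun i => ⟨(hprop _ (hcW i)).2.2.2.2.2.2.2.2.1, (hprop _ (hcW i)).2.2.2.2.2.2.2.2.2⟩⟩

lemma k2t_bound {E : Finset (Finset V)} {t : ℕ} (hK : BergeK2tFree E t)
    {a b : V} (hab : a ≠ b)
    (W : Finset V) (F G : V → Finset V)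
    (hprop : ∀ w ∈ W, w ≠ a ∧ w ≠ b ∧ F w ∈ E ∧ a ∈ F w ∧ w ∈ F w ∧
        G w ∈ E ∧ b ∈ G w ∧ w ∈ G w)
    (hFinj : Set.InjOn F ↑W) (hGinj : Set.InjOn G ↑W)
    (hFG : ∀ w ∈ W, ∀ w' ∈ W, F w ≠ G w') :
    W.card ≤ t - 1 := by
  by_contra hcon
  push_neg at hcon
  have hsW : t ≤ W.card := by omega
  obtain ⟨W', hW'W, hW'card⟩ := Finset.exists_subset_card_eq hsW
  let eqv : W' ≃ Fin t := Finset.equivFinOfCardEq hW'card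
  let c : Fin t → V := fun i => ((eqv.symm i : W') : V)
  have hcW : ∀ i, c i ∈ W := fun i => hW'W (eqv.symm i).2
  have hcinj : Function.Injective c := by
    intro i j h
    have : eqv.symm i = eqv.symm j := Subtype.ext h
    exact eqv.symm.injective this
  apply hK
  refine ⟨a, b, c, F ∘ c, G ∘ c, hab, hcinj,
    fun i => ⟨(hprop _ (hcW i)).1, (hprop _ (hcW i)).2.1⟩,
    fun i => ⟨(hprop _ (hcW i)).2.2.1, (hprop _ (hcW i)).2.2.2.1, (hprop _ (hcW i)).2.2.2.2.1⟩,
    fun i => ⟨(hprop _ (hcW i)).2.2.2.2.2.1, (hprop _ (hcW i)).2.2.2.2.2.2.1,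
      (hprop _ (hcW i)).2.2.2.2.2.2.2⟩,
    fun i j h => hcinj (hFinj (Finset.mem_coe.mpr (hcW i)) (Finset.mem_coe.mpr (hcW j)) h),
    fun i j h => hcinj (hGinj (Finset.mem_coe.mpr (hcW i)) (Finset.mem_coe.mpr (hcW j)) h),
    fun i j => hFG _ (hcW i) _ (hcW j)⟩




variable {n : ℕ}

/-- sum over all functions with image a fixed set of matching cardinality -/
lemma sum_over_enum {c : ℕ} (S : Finset (Fin n)) (hS : S.card = c) (x : Fin n → ℂ) :
    ∑ p ∈ Finset.univ.filter
        (fun p : Fin c → Fin n => Finset.image p Finset.univ = S), (∏ m, x (p m))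
      = (Nat.factorial c : ℂ) * ∏ j ∈ S, x j := by
  classical
  let g : S ≃ Fin c := Finset.equivFinOfCardEq hS
  let ψ : Equiv.Perm (Fin c) → (Fin c → Fin n) := fun σ m => ((g.symm (σ m) : S) : Fin n)
  have hψinj : Function.Injective ψ := by
    intro σ σ' h
    ext m
    have : ((g.symm (σ m) : S) : Fin n) = ((g.symm (σ' m) : S) : Fin n) := congrFun h m
    have h2 : g.symm (σ m) = g.symm (σ' m) := Subtype.ext this
    exact congrArg Fin.val (g.symm.injective h2)
  have himg : ∀ σ : Equiv.Perm (Fin c), Finset.image (ψ σ) Finset.univ = S := by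
    intro σ
    apply Finset.eq_of_subset_of_card_le
    · intro z hz
      rw [Finset.mem_image] at hz
      obtain ⟨m, _, rfl⟩ := hz
      exact (g.symm (σ m)).2
    · have hinj : Function.Injective (ψ σ) := by
        intro m m' h
        exact σ.injective (g.symm.injective (Subtype.ext h))
      rw [Finset.card_image_of_injective _ hinj, hS, Finset.card_univ, Fintype.card_fin]
  have hsurj : ∀ p : Fin c → Fin n, Finset.image p Finset.univ = S →
      ∃ σ : Equiv.Perm (Fin c), ψ σ = p := by
    intro p hp
    have hinj : Function.Injective p := by
      have hcard : (Finset.image p Finset.univ).card = (Finset.univ : Finset (Fin c)).card := by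
        rw [hp, hS]
        simp
      have := Finset.injOn_of_card_image_eq hcard
      intro m m' h
      exact this (Finset.mem_coe.mpr (Finset.mem_univ m)) (Finset.mem_coe.mpr (Finset.mem_univ m')) h
    let p' : Fin c → S := fun m => ⟨p m, by rw [← hp]; exact Finset.mem_image_of_mem p (Finset.mem_univ m)⟩
    have hp'inj : Function.Injective p' := fun m m' h => hinj (congrArg Subtype.val h)
    let σ : Fin c → Fin c := fun m => g (p' m)
    have hσinj : Function.Injective σ := fun m m' h => hp'inj (g.injective h)
    have hσbij : Function.Bijective σ := Finite.injective_iff_bijective.mp hσinj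
    refine ⟨Equiv.ofBijective σ hσbij, ?_⟩
    funext m
    show ((g.symm (g (p' m)) : S) : Fin n) = p m
    rw [Equiv.symm_apply_apply]
  have hset : Finset.univ.filter
      (fun p : Fin c → Fin n => Finset.image p Finset.univ = S)
      = Finset.image ψ Finset.univ := by
    apply Finset.ext
    intro p
    rw [Finset.mem_filter, Finset.mem_image]
    constructor
    · rintro ⟨-, hp⟩
      obtain ⟨σ, hσ⟩ := hsurj p hp
      exact ⟨σ, Finset.mem_univ _, hσ⟩
    · rintro ⟨σ, -, rfl⟩
      exact ⟨Finset.mem_univ _, himg σ⟩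
  rw [hset, Finset.sum_image (fun σ _ σ' _ h => hψinj h)]
  have hprodeq : ∀ σ : Equiv.Perm (Fin c), (∏ m, x (ψ σ m)) = ∏ j ∈ S, x j := by
    intro σ
    have h1 : (∏ m, x (ψ σ m)) = ∏ m, x ((g.symm m : S) : Fin n) :=
      Equiv.prod_comp σ (fun m => x ((g.symm m : S) : Fin n))
    rw [h1]
    have h2 : (∏ m, x ((g.symm m : S) : Fin n)) = ∏ j : S, x j :=
      Equiv.prod_comp g.symm (fun (j : S) => x j)
    rw [h2]
    exact Finset.prod_coe_sort S x
  rw [Finset.sum_congr rfl (fun σ _ => hprodeq σ), Finset.sum_const, Finset.card_univ]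
  rw [Fintype.card_perm, Fintype.card_fin, nsmul_eq_mul]

lemma tensor_sum_eq {k : ℕ} (hk : 3 ≤ k) (E : Finset (Finset (Fin n)))
    (hunif : ∀ e ∈ E, e.card = k) (x : Fin n → ℂ) (i : Fin n) :
    (∑ p : Fin (k - 1) → Fin n, adjT n k E i p * ∏ m, x (p m))
      = ∑ e ∈ E.filter (fun e => i ∈ e), ∏ j ∈ e.erase i, x j := by
  classical
  have h1 : (∑ p : Fin (k - 1) → Fin n, adjT n k E i p * ∏ m, x (p m))
      = ∑ p ∈ Finset.univ.filter
          (fun p : Fin (k-1) → Fin n => insert i (Finset.image p Finset.univ) ∈ E),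
          ((1 : ℂ) / (Nat.factorial (k - 1)) * ∏ m, x (p m)) := by
    rw [Finset.sum_filter]
    apply Finset.sum_congr rfl
    intro p _
    rw [adjT]
    by_cases h : insert i (Finset.image p Finset.univ) ∈ E <;> simp [h]
  rw [h1]
  have hpart : Finset.univ.filter
      (fun p : Fin (k-1) → Fin n => insert i (Finset.image p Finset.univ) ∈ E)
      = (E.filter (fun e => i ∈ e)).biUnion
          (fun e => Finset.univ.filter
            (fun p : Fin (k-1) → Fin n => Finset.image p Finset.univ = e.erase i)) := by
    apply Finset.ext
    intro p
    rw [Finset.mem_filter, Finset.mem_biUnion]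
    constructor
    · rintro ⟨-, hp⟩
      refine ⟨insert i (Finset.image p Finset.univ), ?_, ?_⟩
      · rw [Finset.mem_filter]
        exact ⟨hp, Finset.mem_insert_self _ _⟩
      · rw [Finset.mem_filter]
        refine ⟨Finset.mem_univ _, ?_⟩
        have hcard := hunif _ hp
        have hle : (Finset.image p Finset.univ).card ≤ k - 1 := by
          calc (Finset.image p Finset.univ).card ≤ (Finset.univ : Finset (Fin (k-1))).card :=
                Finset.card_image_le
            _ = k - 1 := by rw [Finset.card_univ, Fintype.card_fin]
        have hnotmem : i ∉ Finset.image p Finset.univ := by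
          intro hmem
          rw [Finset.insert_eq_self.mpr hmem] at hcard
          omega
        rw [Finset.erase_insert hnotmem]
    · rintro ⟨e, he, hp⟩
      rw [Finset.mem_filter] at he hp
      refine ⟨Finset.mem_univ _, ?_⟩
      rw [hp.2, Finset.insert_erase he.2]
      exact he.1
  rw [hpart]
  rw [Finset.sum_biUnion]
  · apply Finset.sum_congr rfl
    intro e he
    rw [Finset.mem_filter] at he
    have hcard : (e.erase i).card = k - 1 := by
      rw [Finset.card_erase_of_mem he.2, hunif _ he.1]
    rw [← Finset.mul_sum, sum_over_enum (e.erase i) hcard x]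
    have hfac : (Nat.factorial (k-1) : ℂ) ≠ 0 := by
      exact_mod_cast Nat.factorial_ne_zero (k-1)
    field_simp
  · intro e he e' he' hne
    apply Finset.disjoint_left.mpr
    intro p hp hp'
    rw [Finset.mem_coe, Finset.mem_filter] at he he'
    rw [Finset.mem_filter] at hp hp'
    apply hne
    have : e.erase i = e'.erase i := by rw [← hp.2, hp'.2]
    have h2 : insert i (e.erase i) = insert i (e'.erase i) := by rw [this]
    rwa [Finset.insert_erase he.2, Finset.insert_erase he'.2] at h2



lemma mul_prod_le_sum_pow {α : Type*} {c : ℕ} (hc : 1 ≤ c) (S : Finset α) (hS : S.card = c)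
    (y : α → ℝ) (hy : ∀ j, 0 ≤ y j) :
    (c : ℝ) * ∏ j ∈ S, y j ≤ ∑ j ∈ S, y j ^ c := by
  have hcpos : (0:ℝ) < c := by exact_mod_cast hc
  have h := Real.geom_mean_le_arith_mean_weighted S (fun _ => (c:ℝ)⁻¹) (fun j => y j ^ c)
    (fun i _ => inv_nonneg.mpr (le_of_lt hcpos))
    (by rw [Finset.sum_const, hS, nsmul_eq_mul, mul_inv_cancel₀ (ne_of_gt hcpos)])
    (fun i _ => pow_nonneg (hy i) c)
  have hLHS : (∏ j ∈ S, (y j ^ c) ^ ((c:ℝ)⁻¹)) = ∏ j ∈ S, y j := by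
    apply Finset.prod_congr rfl
    intro j _
    rw [← Real.rpow_natCast (y j) c, ← Real.rpow_mul (hy j), mul_inv_cancel₀ (ne_of_gt hcpos),
      Real.rpow_one]
  rw [hLHS] at h
  have hRHS : (∑ j ∈ S, (c:ℝ)⁻¹ * y j ^ c) = (c:ℝ)⁻¹ * ∑ j ∈ S, y j ^ c := by
    rw [Finset.mul_sum]
  rw [hRHS] at h
  calc (c:ℝ) * ∏ j ∈ S, y j ≤ (c:ℝ) * ((c:ℝ)⁻¹ * ∑ j ∈ S, y j ^ c) := by
        apply mul_le_mul_of_nonneg_left h (le_of_lt hcpos)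
    _ = ∑ j ∈ S, y j ^ c := by field_simp


lemma card_le_of_cover {α : Type*} [DecidableEq α] (W S : Finset α) (Gs : α → Finset α) (m : ℕ)
    (hcov : ∀ w ∈ W, ∃ j ∈ S, w ∈ Gs j) (hm : ∀ j ∈ S, (Gs j).card ≤ m) :
    W.card ≤ S.card * m := by
  calc W.card ≤ (S.biUnion Gs).card := by
        apply Finset.card_le_card
        intro w hw
        obtain ⟨j, hj, hwj⟩ := hcov w hw
        exact Finset.mem_biUnion.mpr ⟨j, hj, hwj⟩
    _ ≤ ∑ j ∈ S, (Gs j).card := Finset.card_biUnion_le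
    _ ≤ ∑ j ∈ S, m := Finset.sum_le_sum hm
    _ = S.card * m := by rw [Finset.sum_const, smul_eq_mul]

lemma key {n : ℕ} (k s t : ℕ) (hn : 3 ≤ n) (hk : 3 ≤ k) (hs : 2 ≤ s) (ht1 : 1 ≤ t)
    (ht2 : (t : ℝ) ≤ (6 * (k : ℝ) ^ 2 - 15 * (k : ℝ) + 10) * ((s : ℝ) - 1) / 2 + 1)
    (E : Finset (Finset (Fin n)))
    (hunif : ∀ e ∈ E, e.card = k)
    (hlin : ∀ e ∈ E, ∀ f ∈ E, e ≠ f → (e ∩ f).card ≤ 1)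
    (hB : BergeBookFree E s) (hK : BergeK2tFree E t)
    (r : ℝ) (hr : 0 ≤ r) (y : Fin n → ℝ) (u : Fin n)
    (hy0 : ∀ i, 0 ≤ y i) (hy1 : ∀ i, y i ≤ 1) (hyu : y u = 1)
    (EIG : ∀ i, r * y i ^ (k-1) ≤ ∑ e ∈ E.filter (fun e => i ∈ e), ∏ j ∈ e.erase i, y j) :
    r ^ 2 ≤ (6 * (k : ℝ) ^ 2 - 15 * (k : ℝ) + 10) * ((s : ℝ) - 1)
          * ((n : ℝ) - 1) / (2 * ((k : ℝ) - 1) ^ 2) := by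
  classical
  have hk1 : 1 ≤ k - 1 := by omega
  have hone : (1:ℕ) ≤ k := by omega
  have hcastk : ((k - 1 : ℕ) : ℝ) = (k:ℝ) - 1 := by
    rw [Nat.cast_sub hone, Nat.cast_one]
  have hkR : (0:ℝ) < (k:ℝ) - 1 := by
    have : (3:ℝ) ≤ (k:ℝ) := by exact_mod_cast hk
    linarith
  set UE := E.filter (fun e => u ∈ e) with hUEdef
  set Nu := UE.biUnion (fun e => e.erase u) with hNudef
  have huniq : ∀ {a b : Fin n}, a ≠ b → ∀ {e : Finset (Fin n)}, e ∈ E → a ∈ e → b ∈ e →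
      edg E a b = e := by
    intro a b hab e he ha hb
    exact edg_eq hlin hab he ha hb
  have hNumem : ∀ j : Fin n, j ∈ Nu ↔ (j ≠ u ∧ ∃ e ∈ E, u ∈ e ∧ j ∈ e) := by
    intro j
    rw [hNudef, Finset.mem_biUnion]
    constructor
    · rintro ⟨e, he, hj⟩
      rw [hUEdef, Finset.mem_filter] at he
      rw [Finset.mem_erase] at hj
      exact ⟨hj.1, e, he.1, he.2, hj.2⟩
    · rintro ⟨hju, e, he, hu, hj⟩
      exact ⟨e, Finset.mem_filter.mpr ⟨he, hu⟩, Finset.mem_erase.mpr ⟨hju, hj⟩⟩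
  have hNuedge : ∀ j ∈ Nu, edg E u j ∈ E ∧ u ∈ edg E u j ∧ j ∈ edg E u j := by
    intro j hj
    obtain ⟨hju, e, he, hu, hje⟩ := (hNumem j).mp hj
    have heq := huniq (Ne.symm hju) he hu hje
    rw [heq]; exact ⟨he, hu, hje⟩
  set Pw : Fin n → Finset (Fin n) := fun w =>
    Nu.filter (fun j => j ≠ w ∧ ∃ f ∈ E, j ∈ f ∧ w ∈ f ∧ f ≠ edg E u j) with hPwdef
  have hPmem : ∀ w j, j ∈ Pw w → j ∈ Nu ∧ j ≠ w ∧ edg E j w ∈ E ∧ j ∈ edg E j w ∧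
      w ∈ edg E j w ∧ edg E j w ≠ edg E u j := by
    intro w j hj
    simp only [hPwdef, Finset.mem_filter] at hj
    obtain ⟨hjNu, hjw, f, hf, hjf, hwf, hfne⟩ := hj
    have heq := huniq hjw hf hjf hwf
    rw [heq]
    exact ⟨hjNu, hjw, hf, hjf, hwf, hfne⟩
  set D := Finset.univ.erase u with hDdef
  -- ===================== PART 1 : the spectral chain =====================
  have chain : ((k:ℝ) - 1)^2 * (r * r)
      ≤ ((k:ℝ) - 1) * (Nu.card : ℝ) + ((∑ w ∈ D, (Pw w).card : ℕ) : ℝ) := by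
    have c1 : r * r ≤ ∑ e ∈ UE, (r * ∏ j ∈ e.erase u, y j) := by
      have h := EIG u
      rw [hyu, one_pow, mul_one] at h
      calc r * r ≤ r * ∑ e ∈ UE, ∏ j ∈ e.erase u, y j := mul_le_mul_of_nonneg_left h hr
        _ = ∑ e ∈ UE, (r * ∏ j ∈ e.erase u, y j) := Finset.mul_sum _ _ _
    have c2 : ∀ e ∈ UE, ((k:ℝ) - 1) * (r * ∏ j ∈ e.erase u, y j)
        ≤ ∑ j ∈ e.erase u, ∑ f ∈ E.filter (fun f => j ∈ f), ∏ z ∈ f.erase j, y z := by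
      intro e he
      rw [hUEdef, Finset.mem_filter] at he
      have hcard : (e.erase u).card = k - 1 := by
        rw [Finset.card_erase_of_mem he.2, hunif _ he.1]
      have hAM := mul_prod_le_sum_pow hk1 (e.erase u) hcard y hy0
      rw [hcastk] at hAM
      calc ((k:ℝ)-1) * (r * ∏ j ∈ e.erase u, y j)
          = r * (((k:ℝ)-1) * ∏ j ∈ e.erase u, y j) := by ring
        _ ≤ r * ∑ j ∈ e.erase u, y j ^ (k-1) := mul_le_mul_of_nonneg_left hAM hr
        _ = ∑ j ∈ e.erase u, (r * y j ^ (k-1)) := Finset.mul_sum _ _ _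
        _ ≤ ∑ j ∈ e.erase u, ∑ f ∈ E.filter (fun f => j ∈ f), ∏ z ∈ f.erase j, y z :=
            Finset.sum_le_sum (fun j _ => EIG j)
    have hdisjUE : (↑UE : Set (Finset (Fin n))).PairwiseDisjoint
        (fun e : Finset (Fin n) => e.erase u) := by
      intro e he e' he' hne
      rw [Finset.mem_coe, hUEdef, Finset.mem_filter] at he he'
      apply Finset.disjoint_left.mpr
      intro z hz hz'
      rw [Finset.mem_erase] at hz hz'
      have h2 : ({u, z} : Finset (Fin n)) ⊆ e ∩ e' := by
        intro a ha
        rw [Finset.mem_insert, Finset.mem_singleton] at ha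
        rcases ha with rfl | rfl
        · exact Finset.mem_inter.mpr ⟨he.2, he'.2⟩
        · exact Finset.mem_inter.mpr ⟨hz.2, hz'.2⟩
      have hcard2 := Finset.card_le_card h2
      rw [Finset.card_pair (Ne.symm hz.1)] at hcard2
      have := hlin e he.1 e' he'.1 hne
      omega
    have c4 : ((k:ℝ)-1) * (r*r)
        ≤ ∑ j ∈ Nu, ∑ f ∈ E.filter (fun f => j ∈ f), ∏ z ∈ f.erase j, y z := by
      calc ((k:ℝ)-1)*(r*r) ≤ ((k:ℝ)-1) * ∑ e ∈ UE, (r * ∏ j ∈ e.erase u, y j) :=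
            mul_le_mul_of_nonneg_left c1 hkR.le
        _ = ∑ e ∈ UE, ((k:ℝ)-1) * (r * ∏ j ∈ e.erase u, y j) := Finset.mul_sum _ _ _
        _ ≤ ∑ e ∈ UE, ∑ j ∈ e.erase u, ∑ f ∈ E.filter (fun f => j ∈ f), ∏ z ∈ f.erase j, y z :=
            Finset.sum_le_sum c2
        _ = ∑ j ∈ Nu, ∑ f ∈ E.filter (fun f => j ∈ f), ∏ z ∈ f.erase j, y z := by
            rw [hNudef, Finset.sum_biUnion hdisjUE]
    have c5 : ∀ j ∈ Nu, (∑ f ∈ E.filter (fun f => j ∈ f), ∏ z ∈ f.erase j, y z)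
        ≤ 1 + (((E.filter (fun f => j ∈ f)).erase (edg E u j)).card : ℝ) := by
      intro j hj
      obtain ⟨hjE, hju', hjj⟩ := hNuedge j hj
      have hmem : edg E u j ∈ E.filter (fun f => j ∈ f) := Finset.mem_filter.mpr ⟨hjE, hjj⟩
      have hprod1 : ∀ f : Finset (Fin n), ∏ z ∈ f.erase j, y z ≤ 1 :=
        fun f => Finset.prod_le_one (fun z _ => hy0 z) (fun z _ => hy1 z)
      calc (∑ f ∈ E.filter (fun f => j ∈ f), ∏ z ∈ f.erase j, y z)
          = (∑ f ∈ (E.filter (fun f => j ∈ f)).erase (edg E u j), ∏ z ∈ f.erase j, y z)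
            + ∏ z ∈ (edg E u j).erase j, y z := (Finset.sum_erase_add _ _ hmem).symm
        _ ≤ (((E.filter (fun f => j ∈ f)).erase (edg E u j)).card : ℝ) * 1 + 1 := by
            apply add_le_add
            · have := Finset.sum_le_card_nsmul ((E.filter (fun f => j ∈ f)).erase (edg E u j))
                (fun f => ∏ z ∈ f.erase j, y z) 1 (fun f _ => hprod1 f)
              rwa [nsmul_eq_mul] at this
            · exact hprod1 _
        _ = 1 + (((E.filter (fun f => j ∈ f)).erase (edg E u j)).card : ℝ) := by ring
    have c6 : ((k:ℝ)-1) * (r*r) ≤ (Nu.card : ℝ)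
        + ∑ j ∈ Nu, (((E.filter (fun f => j ∈ f)).erase (edg E u j)).card : ℝ) := by
      calc ((k:ℝ)-1)*(r*r)
          ≤ ∑ j ∈ Nu, (1 + (((E.filter (fun f => j ∈ f)).erase (edg E u j)).card : ℝ)) :=
            le_trans c4 (Finset.sum_le_sum c5)
        _ = (Nu.card : ℝ)
            + ∑ j ∈ Nu, (((E.filter (fun f => j ∈ f)).erase (edg E u j)).card : ℝ) := by
            rw [Finset.sum_add_distrib, Finset.sum_const, nsmul_eq_mul, mul_one]
    -- counting identity
    have c7 : ∀ j ∈ Nu,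
        (Finset.univ.filter (fun w => j ≠ w ∧ ∃ f ∈ E, j ∈ f ∧ w ∈ f ∧ f ≠ edg E u j)).card
        = ((E.filter (fun f => j ∈ f)).erase (edg E u j)).card * (k-1) := by
      intro j hj
      have hdisj2 : (↑((E.filter (fun f => j ∈ f)).erase (edg E u j)) : Set (Finset (Fin n))).PairwiseDisjoint
          (fun f : Finset (Fin n) => f.erase j) := by
        intro f hf f' hf' hne
        rw [Finset.mem_coe, Finset.mem_erase, Finset.mem_filter] at hf hf'
        apply Finset.disjoint_left.mpr
        intro z hz hz'
        rw [Finset.mem_erase] at hz hz'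
        have h2 : ({j, z} : Finset (Fin n)) ⊆ f ∩ f' := by
          intro a ha
          rw [Finset.mem_insert, Finset.mem_singleton] at ha
          rcases ha with rfl | rfl
          · exact Finset.mem_inter.mpr ⟨hf.2.2, hf'.2.2⟩
          · exact Finset.mem_inter.mpr ⟨hz.2, hz'.2⟩
        have hcard2 := Finset.card_le_card h2
        rw [Finset.card_pair (Ne.symm hz.1)] at hcard2
        have := hlin f hf.2.1 f' hf'.2.1 hne
        omega
      have hTeq : Finset.univ.filter (fun w => j ≠ w ∧ ∃ f ∈ E, j ∈ f ∧ w ∈ f ∧ f ≠ edg E u j)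
          = ((E.filter (fun f => j ∈ f)).erase (edg E u j)).biUnion
              (fun f => f.erase j) := by
        ext w
        simp only [Finset.mem_filter, Finset.mem_univ, true_and, Finset.mem_biUnion,
          Finset.mem_erase]
        constructor
        · rintro ⟨hjw, f, hf, hjf, hwf, hfne⟩
          exact ⟨f, ⟨hfne, hf, hjf⟩, Ne.symm hjw, hwf⟩
        · rintro ⟨f, ⟨hfne, hf, hjf⟩, hwj, hwf⟩
          exact ⟨Ne.symm hwj, f, hf, hjf, hwf, hfne⟩
      rw [hTeq, Finset.card_biUnion (fun f hf f' hf' hne => hdisj2 hf hf' hne)]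
      rw [Finset.sum_congr rfl (fun f hf => ?_), Finset.sum_const, smul_eq_mul]
      rw [Finset.mem_erase, Finset.mem_filter] at hf
      rw [Finset.card_erase_of_mem hf.2.2, hunif _ hf.2.1]
    have c8 : ∑ j ∈ Nu,
        (Finset.univ.filter (fun w => j ≠ w ∧ ∃ f ∈ E, j ∈ f ∧ w ∈ f ∧ f ≠ edg E u j)).card
        = ∑ w ∈ D, (Pw w).card := by
      have hPu : (Pw u).card = 0 := by
        rw [Finset.card_eq_zero]
        apply Finset.eq_empty_iff_forall_notMem.mpr
        intro j hj
        simp only [hPwdef, Finset.mem_filter] at hj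
        obtain ⟨hjNu, hju, f, hf, hjf, huf, hfne⟩ := hj
        exact hfne (huniq (fun h => hju h.symm) hf huf hjf).symm
      have hswap : ∑ j ∈ Nu, ∑ w ∈ Finset.univ,
            (if (j ≠ w ∧ ∃ f ∈ E, j ∈ f ∧ w ∈ f ∧ f ≠ edg E u j) then 1 else 0)
          = ∑ w ∈ Finset.univ, ∑ j ∈ Nu,
            (if (j ≠ w ∧ ∃ f ∈ E, j ∈ f ∧ w ∈ f ∧ f ≠ edg E u j) then 1 else 0) :=
        Finset.sum_comm
      calc ∑ j ∈ Nu,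
            (Finset.univ.filter (fun w => j ≠ w ∧ ∃ f ∈ E, j ∈ f ∧ w ∈ f ∧ f ≠ edg E u j)).card
          = ∑ j ∈ Nu, ∑ w ∈ Finset.univ,
            (if (j ≠ w ∧ ∃ f ∈ E, j ∈ f ∧ w ∈ f ∧ f ≠ edg E u j) then 1 else 0) := by
            apply Finset.sum_congr rfl
            intro j _
            rw [Finset.card_filter]
        _ = ∑ w ∈ Finset.univ, ∑ j ∈ Nu,
            (if (j ≠ w ∧ ∃ f ∈ E, j ∈ f ∧ w ∈ f ∧ f ≠ edg E u j) then 1 else 0) := hswap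
        _ = ∑ w ∈ Finset.univ, (Pw w).card := by
            apply Finset.sum_congr rfl
            intro w _
            rw [hPwdef]
            rw [Finset.card_filter]
        _ = ∑ w ∈ D, (Pw w).card := by
            rw [hDdef]
            rw [← Finset.sum_erase_add Finset.univ _ (Finset.mem_univ u), hPu, add_zero]
    calc ((k:ℝ)-1)^2 * (r*r) = ((k:ℝ)-1) * (((k:ℝ)-1) * (r*r)) := by ring
      _ ≤ ((k:ℝ)-1) * ((Nu.card : ℝ)
            + ∑ j ∈ Nu, (((E.filter (fun f => j ∈ f)).erase (edg E u j)).card : ℝ)) :=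
          mul_le_mul_of_nonneg_left c6 hkR.le
      _ = ((k:ℝ)-1) * (Nu.card : ℝ)
            + ∑ j ∈ Nu, ((k:ℝ)-1) * (((E.filter (fun f => j ∈ f)).erase (edg E u j)).card : ℝ) := by
          rw [mul_add, Finset.mul_sum]
      _ = ((k:ℝ)-1) * (Nu.card : ℝ) + ((∑ w ∈ D, (Pw w).card : ℕ) : ℝ) := by
          congr 1
          rw [← c8]
          push_cast
          apply Finset.sum_congr rfl
          intro j hj
          rw [c7 j hj]
          push_cast [hcastk]
          ring
  -- ===================== PART 2 : combinatorial bound =====================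
  have combo : 2 * (∑ w ∈ D, (Pw w).card)
      ≤ 2*(s-1)*Nu.card + 2*(t-1)*((n-1) - Nu.card)
        + Nu.card * (k-2) * (2*((s-1)*(2*k-3)) + (k-2)) := by
    -- pair sets
    set SP := Nu.offDiag.filter (fun pq => edg E u pq.1 = edg E u pq.2) with hSPdef
    set QP := Nu.offDiag.filter (fun pq =>
      ∃ f ∈ E, pq.1 ∈ f ∧ pq.2 ∈ f ∧ f ≠ edg E u pq.1 ∧ f ≠ edg E u pq.2) with hQPdef
    have hNuD : Nu ⊆ D := by
      intro j hj
      rw [hDdef, Finset.mem_erase]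
      exact ⟨((hNumem j).mp hj).1, Finset.mem_univ j⟩
    -- ============ per-w bound ============
    have perw : ∀ w ∈ D, 2 * (Pw w).card
        ≤ 2 * (if w ∈ Nu then s-1 else t-1)
          + (SP.filter (fun pq => pq.1 ∈ Pw w ∧ pq.2 ∈ Pw w)).card
          + (QP.filter (fun pq => pq.1 ∈ Pw w ∧ pq.2 ∈ Pw w ∧
              edg E pq.1 w = edg E pq.2 w)).card := by
      intro w hwD
      have hwu : w ≠ u := (Finset.mem_erase.mp (hDdef ▸ hwD)).1
      obtain ⟨S, hSsub, hinj1, hinj2, hcov⟩ :=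
        exists_rainbow (Pw w) (fun j => edg E u j) (fun j => edg E j w)
      have h2m := two_mul_card_le (Pw w) (fun j => edg E u j) (fun j => edg E j w)
        S hSsub hinj1 hinj2 hcov
        (SP.filter (fun pq => pq.1 ∈ Pw w ∧ pq.2 ∈ Pw w))
        (QP.filter (fun pq => pq.1 ∈ Pw w ∧ pq.2 ∈ Pw w ∧ edg E pq.1 w = edg E pq.2 w))
        ?hope ?hopf
      -- identify the two offDiag-filters
      case hope =>
        rintro ⟨p1, p2⟩ h1 h2 h3 h4
        simp only at h3 h4 ⊢
        simp only [hSPdef, Finset.mem_filter, Finset.mem_offDiag]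
        exact ⟨⟨⟨(hPmem w _ h1).1, (hPmem w _ h2).1, h3⟩, h4⟩, h1, h2⟩
      case hopf =>
        rintro ⟨p1, p2⟩ h1 h2 h3 h4
        simp only at h3 h4 ⊢
        simp only [hQPdef, Finset.mem_filter, Finset.mem_offDiag]
        obtain ⟨hNu1, hne1, hE1, hm1, hw1, hx1⟩ := hPmem w _ h1
        obtain ⟨hNu2, hne2, hE2, hm2, hw2, hx2⟩ := hPmem w _ h2
        refine ⟨⟨⟨hNu1, hNu2, h3⟩, ?_⟩, h1, h2, h4⟩
        refine ⟨edg E p1 w, hE1, hm1, ?_, hx1, ?_⟩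
        · rw [h4]; exact hm2
        · rw [h4]; exact hx2
      -- bound S.card
      have hScard : S.card ≤ (if w ∈ Nu then s-1 else t-1) := by
        by_cases hwNu : w ∈ Nu
        · rw [if_pos hwNu]
          obtain ⟨he0E, hue0, hwe0⟩ := hNuedge w hwNu
          apply book_bound hB (fun h => hwu h.symm) he0E hue0 hwe0 S
            (fun j => edg E u j) (fun j => edg E j w) ?_ hinj1 hinj2 ?_
          · intro j hjS
            have hjP := hSsub hjS
            obtain ⟨hjNu, hjw, hjwE, hjm, hwm, hjx⟩ := hPmem w j hjP
            obtain ⟨hujE, huu, huj⟩ := hNuedge j hjNu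
            have hju : j ≠ u := ((hNumem j).mp hjNu).1
            have he0F : edg E u w ≠ edg E u j := by
              intro hX
              have hjX : j ∈ edg E u w := by rw [hX]; exact huj
              have hwX : w ∈ edg E u w := hwe0
              have hXE : edg E u w ∈ E := he0E
              have := huniq hjw hXE hjX hwX
              rw [hX] at this
              exact hjx this
            have he0G : edg E u w ≠ edg E j w := by
              intro hX
              have hjX : j ∈ edg E u w := by rw [hX]; exact hjm
              have := huniq (fun h => hju h.symm) he0E hue0 hjX
              exact hjx (by rw [← hX, this])
            exact ⟨hju, hjw, hujE, huu, huj, hjwE, hwm, hjm, he0F, he0G⟩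
          · intro j hjS j' hjS' hX
            obtain ⟨hjNu, hjw, hjwE, hjm, hwm, hjx⟩ := hPmem w j' (hSsub hjS')
            obtain ⟨hujE, huu, huj⟩ := hNuedge j (hPmem w j (hSsub hjS)).1
            -- X := edg E u j = edg E j' w contains u and w
            have hXE : edg E u j ∈ E := hujE
            have hXu : u ∈ edg E u j := huu
            have hXw : w ∈ edg E u j := by rw [hX]; exact hwm
            have h1 := huniq (fun h => hwu h.symm) hXE hXu hXw
            -- edg E u w = edg E u j = edg E j' w ; apply e0≠F argument
            have hjX : j' ∈ edg E u j := by rw [hX]; exact hjm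
            have hj'u : j' ≠ u := ((hNumem j').mp hjNu).1
            have h2 := huniq (fun h => hj'u h.symm) hXE hXu hjX
            -- h2 : edg E u j' = edg E u j
            have : edg E j' w = edg E u j' := by rw [h2, ← hX]
            exact hjx this
        · rw [if_neg hwNu]
          apply k2t_bound hK (Ne.symm hwu) S
            (fun j => edg E u j) (fun j => edg E j w) ?_ hinj1 hinj2 ?_
          · intro j hjS
            have hjP := hSsub hjS
            obtain ⟨hjNu, hjw, hjwE, hjm, hwm, hjx⟩ := hPmem w j hjP
            obtain ⟨hujE, huu, huj⟩ := hNuedge j hjNu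
            have hju : j ≠ u := ((hNumem j).mp hjNu).1
            exact ⟨hju, hjw, hujE, huu, huj, hjwE, hwm, hjm⟩
          · intro j hjS j' hjS' hX
            obtain ⟨hjNu', hjw', hjwE', hjm', hwm', hjx'⟩ := hPmem w j' (hSsub hjS')
            obtain ⟨hujE, huu, huj⟩ := hNuedge j (hPmem w j (hSsub hjS)).1
            apply hwNu
            rw [hNumem w]
            refine ⟨hwu, edg E u j, hujE, huu, ?_⟩
            rw [hX]; exact hwm'
      omega
    -- ============ sum the per-w bounds ============
    have summed : 2 * (∑ w ∈ D, (Pw w).card)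
        ≤ (∑ w ∈ D, 2 * (if w ∈ Nu then s-1 else t-1))
          + (∑ w ∈ D, (SP.filter (fun pq => pq.1 ∈ Pw w ∧ pq.2 ∈ Pw w)).card)
          + (∑ w ∈ D, (QP.filter (fun pq => pq.1 ∈ Pw w ∧ pq.2 ∈ Pw w ∧
              edg E pq.1 w = edg E pq.2 w)).card) := by
      rw [Finset.mul_sum]
      calc ∑ w ∈ D, 2 * (Pw w).card
          ≤ ∑ w ∈ D, (2 * (if w ∈ Nu then s-1 else t-1)
            + (SP.filter (fun pq => pq.1 ∈ Pw w ∧ pq.2 ∈ Pw w)).card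
            + (QP.filter (fun pq => pq.1 ∈ Pw w ∧ pq.2 ∈ Pw w ∧
                edg E pq.1 w = edg E pq.2 w)).card) := Finset.sum_le_sum perw
        _ = _ := by rw [Finset.sum_add_distrib, Finset.sum_add_distrib]
    -- ============ μ sum ============
    have hDcard : D.card = n - 1 := by
      rw [hDdef, Finset.card_erase_of_mem (Finset.mem_univ u), Finset.card_univ,
        Fintype.card_fin]
    have hmusum : (∑ w ∈ D, 2 * (if w ∈ Nu then s-1 else t-1))
        = 2*(s-1)*Nu.card + 2*(t-1)*((n-1) - Nu.card) := by
      have h1 : D.filter (fun w => w ∈ Nu) = Nu := by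
        apply Finset.Subset.antisymm
        · intro w hw; exact (Finset.mem_filter.mp hw).2
        · intro w hw; exact Finset.mem_filter.mpr ⟨hNuD hw, hw⟩
      have h3 := Finset.card_filter_add_card_filter_not
        (s := D) (p := fun w => w ∈ Nu)
      rw [h1, hDcard] at h3
      rw [← Finset.mul_sum, Finset.sum_ite, Finset.sum_const, Finset.sum_const, h1,
        smul_eq_mul, smul_eq_mul]
      have h4 : (D.filter (fun w => ¬ w ∈ Nu)).card = (n-1) - Nu.card := by omega
      rw [h4]
      ring
    -- ============ the two codegree lemmas ============
    have hcod : ∀ pq ∈ SP, (D.filter (fun w => pq.1 ∈ Pw w ∧ pq.2 ∈ Pw w)).card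
        ≤ (s-1)*(2*k-3) := by
      rintro ⟨p, q⟩ hpq
      simp only [hSPdef, Finset.mem_filter, Finset.mem_offDiag] at hpq
      obtain ⟨⟨hpNu, hqNu, hpqne⟩, hedge⟩ := hpq
      obtain ⟨hpE, hup, hpp⟩ := hNuedge p hpNu
      have hq_in_e0 : q ∈ edg E u p := by rw [hedge]; exact (hNuedge q hqNu).2.2
      simp only []
      set W := D.filter (fun w => p ∈ Pw w ∧ q ∈ Pw w) with hWdef
      have hWfact : ∀ w ∈ W, p ∈ Pw w ∧ q ∈ Pw w := by
        intro w hw; rw [hWdef, Finset.mem_filter] at hw; exact hw.2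
      obtain ⟨S, hSsub, hinj1, hinj2, hcov⟩ :=
        exists_rainbow W (fun w => edg E p w) (fun w => edg E q w)
      have hScard : S.card ≤ s - 1 := by
        apply book_bound hB hpqne hpE hpp hq_in_e0 S
          (fun w => edg E p w) (fun w => edg E q w) ?_ hinj1 hinj2 ?_
        · intro w hwS
          obtain ⟨hwp', hwq'⟩ := hWfact w (hSsub hwS)
          obtain ⟨-, hpw, hpwE, hppw, hwpw, hpwx⟩ := hPmem w p hwp'
          obtain ⟨-, hqw, hqwE, hqqw, hwqw, hqwx⟩ := hPmem w q hwq'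
          refine ⟨fun h => hpw h.symm, fun h => hqw h.symm, hpwE, hppw, hwpw,
            hqwE, hqqw, hwqw, fun h => hpwx h.symm, ?_⟩
          intro h
          exact hqwx (by rw [← h, hedge])
        · intro w hwS w' hwS' hX
          obtain ⟨hwp', hwq'⟩ := hWfact w (hSsub hwS)
          obtain ⟨hwp'', hwq''⟩ := hWfact w' (hSsub hwS')
          obtain ⟨-, -, hpwE, hppw, hwpw, hpwx⟩ := hPmem w p hwp'
          obtain ⟨-, -, hqwE', hqqw', hwqw', hqwx'⟩ := hPmem w' q hwq''
          have hXq : q ∈ edg E p w := by rw [hX]; exact hqqw'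
          have h1 := huniq hpqne hpwE hppw hXq
          have h2 := huniq hpqne hpE hpp hq_in_e0
          exact hpwx (by rw [← h1, h2])
      have hWcard := card_le_of_cover W S
        (fun j => insert j (((edg E p j).erase p).erase j ∪ ((edg E q j).erase q).erase j))
        (2*k-3) ?_ ?_
      · calc W.card ≤ S.card * (2*k-3) := hWcard
          _ ≤ (s-1) * (2*k-3) := Nat.mul_le_mul_right _ hScard
      · intro w hw
        obtain ⟨j, hjS, hcase⟩ := hcov w hw
        refine ⟨j, hjS, ?_⟩
        rw [Finset.mem_insert]
        by_cases hwj : w = j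
        · exact Or.inl hwj
        · right
          rw [Finset.mem_union]
          obtain ⟨hwp', hwq'⟩ := hWfact w hw
          obtain ⟨-, hpw, -, -, hwpw, -⟩ := hPmem w p hwp'
          obtain ⟨-, hqw, -, -, hwqw, -⟩ := hPmem w q hwq'
          rcases hcase with h | h
          · left
            rw [Finset.mem_erase, Finset.mem_erase]
            exact ⟨hwj, fun hh => hpw hh.symm, h ▸ hwpw⟩
          · right
            rw [Finset.mem_erase, Finset.mem_erase]
            exact ⟨hwj, fun hh => hqw hh.symm, h ▸ hwqw⟩
      · intro j hjS
        obtain ⟨hwp', hwq'⟩ := hWfact j (hSsub hjS)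
        obtain ⟨-, hpj, hpjE, hppj, hjpj, -⟩ := hPmem j p hwp'
        obtain ⟨-, hqj, hqjE, hqqj, hjqj, -⟩ := hPmem j q hwq'
        have hc1 : (((edg E p j).erase p).erase j).card = k - 1 - 1 := by
          rw [Finset.card_erase_of_mem (Finset.mem_erase.mpr ⟨fun h => hpj h.symm, hjpj⟩),
            Finset.card_erase_of_mem hppj, hunif _ hpjE]
        have hc2 : (((edg E q j).erase q).erase j).card = k - 1 - 1 := by
          rw [Finset.card_erase_of_mem (Finset.mem_erase.mpr ⟨fun h => hqj h.symm, hjqj⟩),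
            Finset.card_erase_of_mem hqqj, hunif _ hqjE]
        calc (insert j (((edg E p j).erase p).erase j ∪ ((edg E q j).erase q).erase j)).card
            ≤ (((edg E p j).erase p).erase j ∪ ((edg E q j).erase q).erase j).card + 1 :=
              Finset.card_insert_le _ _
          _ ≤ 2*k-3 := by
              have := Finset.card_union_le (((edg E p j).erase p).erase j)
                (((edg E q j).erase q).erase j)
              omega
    have hcodQ : ∀ pq ∈ QP, (D.filter (fun w => pq.1 ∈ Pw w ∧ pq.2 ∈ Pw w ∧
        edg E pq.1 w = edg E pq.2 w)).card ≤ k-2 := by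
      rintro ⟨p, q⟩ hpq
      simp only [hQPdef, Finset.mem_filter, Finset.mem_offDiag] at hpq
      obtain ⟨⟨hpNu, hqNu, hpqne⟩, f, hfE, hpf, hqf, hf1, hf2⟩ := hpq
      have hfeq : edg E p q = f := huniq hpqne hfE hpf hqf
      simp only []
      calc (D.filter (fun w => p ∈ Pw w ∧ q ∈ Pw w ∧ edg E p w = edg E q w)).card
          ≤ (((edg E p q).erase p).erase q).card := by
            apply Finset.card_le_card
            intro w hw
            rw [Finset.mem_filter] at hw
            obtain ⟨hwD', hp', hq', hX⟩ := hw
            obtain ⟨-, hpw, hpwE, hppw, hwpw, -⟩ := hPmem w p hp'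
            obtain ⟨-, hqw, -, hqqw, -, -⟩ := hPmem w q hq'
            have hXq : q ∈ edg E p w := by rw [hX]; exact hqqw
            have h1 := huniq hpqne hpwE hppw hXq
            rw [Finset.mem_erase, Finset.mem_erase, h1]
            exact ⟨fun h => hqw h.symm, fun h => hpw h.symm, hwpw⟩
        _ ≤ k-2 := by
            have hc1 : (((edg E p q).erase p).erase q).card = k - 1 - 1 := by
              rw [Finset.card_erase_of_mem (Finset.mem_erase.mpr ⟨Ne.symm hpqne, hfeq ▸ hqf⟩),
                Finset.card_erase_of_mem (hfeq ▸ hpf), hfeq, hunif _ hfE]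
            omega
    -- ============ swapped sums ============
    have hSPsum : (∑ w ∈ D, (SP.filter (fun pq => pq.1 ∈ Pw w ∧ pq.2 ∈ Pw w)).card)
        ≤ SP.card * ((s-1)*(2*k-3)) := by
      have hswap : ∑ w ∈ D, (SP.filter (fun pq => pq.1 ∈ Pw w ∧ pq.2 ∈ Pw w)).card
          = ∑ pq ∈ SP, (D.filter (fun w => pq.1 ∈ Pw w ∧ pq.2 ∈ Pw w)).card := by
        calc ∑ w ∈ D, (SP.filter (fun pq => pq.1 ∈ Pw w ∧ pq.2 ∈ Pw w)).card
            = ∑ w ∈ D, ∑ pq ∈ SP, (if pq.1 ∈ Pw w ∧ pq.2 ∈ Pw w then 1 else 0) := by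
              exact Finset.sum_congr rfl (fun w _ => Finset.card_filter _ _)
          _ = ∑ pq ∈ SP, ∑ w ∈ D, (if pq.1 ∈ Pw w ∧ pq.2 ∈ Pw w then 1 else 0) :=
              Finset.sum_comm
          _ = ∑ pq ∈ SP, (D.filter (fun w => pq.1 ∈ Pw w ∧ pq.2 ∈ Pw w)).card := by
              exact Finset.sum_congr rfl (fun pq _ => (Finset.card_filter _ _).symm)
      rw [hswap]
      calc ∑ pq ∈ SP, (D.filter (fun w => pq.1 ∈ Pw w ∧ pq.2 ∈ Pw w)).card
          ≤ ∑ _pq ∈ SP, (s-1)*(2*k-3) := Finset.sum_le_sum hcod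
        _ = SP.card * ((s-1)*(2*k-3)) := by rw [Finset.sum_const, smul_eq_mul]
    have hQPsum : (∑ w ∈ D, (QP.filter (fun pq => pq.1 ∈ Pw w ∧ pq.2 ∈ Pw w ∧
          edg E pq.1 w = edg E pq.2 w)).card)
        ≤ QP.card * (k-2) := by
      have hswap : ∑ w ∈ D, (QP.filter (fun pq => pq.1 ∈ Pw w ∧ pq.2 ∈ Pw w ∧
            edg E pq.1 w = edg E pq.2 w)).card
          = ∑ pq ∈ QP, (D.filter (fun w => pq.1 ∈ Pw w ∧ pq.2 ∈ Pw w ∧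
            edg E pq.1 w = edg E pq.2 w)).card := by
        calc ∑ w ∈ D, (QP.filter (fun pq => pq.1 ∈ Pw w ∧ pq.2 ∈ Pw w ∧
              edg E pq.1 w = edg E pq.2 w)).card
            = ∑ w ∈ D, ∑ pq ∈ QP, (if pq.1 ∈ Pw w ∧ pq.2 ∈ Pw w ∧
                edg E pq.1 w = edg E pq.2 w then 1 else 0) := by
              exact Finset.sum_congr rfl (fun w _ => Finset.card_filter _ _)
          _ = ∑ pq ∈ QP, ∑ w ∈ D, (if pq.1 ∈ Pw w ∧ pq.2 ∈ Pw w ∧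
                edg E pq.1 w = edg E pq.2 w then 1 else 0) := Finset.sum_comm
          _ = _ := by
              exact Finset.sum_congr rfl (fun pq _ => (Finset.card_filter _ _).symm)
      rw [hswap]
      calc ∑ pq ∈ QP, (D.filter (fun w => pq.1 ∈ Pw w ∧ pq.2 ∈ Pw w ∧
            edg E pq.1 w = edg E pq.2 w)).card
          ≤ ∑ _pq ∈ QP, (k-2) := Finset.sum_le_sum hcodQ
        _ = QP.card * (k-2) := by rw [Finset.sum_const, smul_eq_mul]
    -- ============ sizes of the pair sets ============
    have hSPcard : SP.card ≤ Nu.card * (k-2) := by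
      have hfib := Finset.card_eq_sum_card_fiberwise (f := Prod.fst) (s := SP) (t := Nu)
        (fun pq hpq => by
          simp only [hSPdef, Finset.mem_coe, Finset.mem_filter, Finset.mem_offDiag] at hpq
          exact hpq.1.1)
      rw [hfib]
      have hbound : ∀ p ∈ Nu, (SP.filter (fun pq => pq.1 = p)).card ≤ k - 2 := by
        intro p hpNu
        obtain ⟨hpE, hup, hpp⟩ := hNuedge p hpNu
        have hpu : p ≠ u := ((hNumem p).mp hpNu).1
        calc (SP.filter (fun pq => pq.1 = p)).card
            ≤ (((edg E u p).erase u).erase p).card := by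
              apply Finset.card_le_card_of_injOn (fun pq => pq.2)
              · rintro ⟨p1, q⟩ hq
                rw [Finset.mem_coe, Finset.mem_filter] at hq
                obtain ⟨hq1, hfst⟩ := hq
                simp only [hSPdef, Finset.mem_filter, Finset.mem_offDiag] at hq1
                simp only at hfst
                subst hfst
                obtain ⟨⟨-, hqNu, hne⟩, hedge⟩ := hq1
                have hq2 : q ∈ edg E u p1 := by rw [hedge]; exact (hNuedge q hqNu).2.2
                rw [Finset.mem_coe, Finset.mem_erase, Finset.mem_erase]
                exact ⟨Ne.symm hne, ((hNumem q).mp hqNu).1, hq2⟩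
              · rintro ⟨a1, a2⟩ ha ⟨b1, b2⟩ hb hab
                simp only [Finset.mem_coe, Finset.mem_filter] at ha hb
                simp only at hab
                have h1 : a1 = p := ha.2
                have h2 : b1 = p := hb.2
                rw [Prod.mk.injEq]
                exact ⟨h1.trans h2.symm, hab⟩
          _ ≤ k - 2 := by
              have hc1 : (((edg E u p).erase u).erase p).card = k - 1 - 1 := by
                rw [Finset.card_erase_of_mem (Finset.mem_erase.mpr ⟨hpu, hpp⟩),
                  Finset.card_erase_of_mem hup, hunif _ hpE]
              omega
      calc ∑ p ∈ Nu, (SP.filter (fun pq => pq.1 = p)).card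
          ≤ ∑ _p ∈ Nu, (k-2) := Finset.sum_le_sum hbound
        _ = Nu.card * (k-2) := by rw [Finset.sum_const, smul_eq_mul]
    have hQPcard : QP.card ≤ Nu.card * ((s-1)*(2*k-3) + (k-2)) := by
      have hfib := Finset.card_eq_sum_card_fiberwise (f := Prod.fst) (s := QP) (t := Nu)
        (fun pq hpq => by
          simp only [hQPdef, Finset.mem_coe, Finset.mem_filter, Finset.mem_offDiag] at hpq
          exact hpq.1.1)
      rw [hfib]
      have hbound : ∀ p ∈ Nu, (QP.filter (fun pq => pq.1 = p)).card
          ≤ (s-1)*(2*k-3) + (k-2) := by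
        intro p hpNu
        obtain ⟨hpE, hup, hpp⟩ := hNuedge p hpNu
        have hpu : p ≠ u := ((hNumem p).mp hpNu).1
        set Qs := Nu.filter (fun q => q ≠ p ∧ ∃ f ∈ E, p ∈ f ∧ q ∈ f ∧
          f ≠ edg E u p ∧ f ≠ edg E u q) with hQsdef
        have hQfact : ∀ q ∈ Qs, q ∈ Nu ∧ q ≠ p ∧ edg E p q ∈ E ∧ p ∈ edg E p q ∧
            q ∈ edg E p q ∧ edg E p q ≠ edg E u p ∧ edg E p q ≠ edg E u q := by
          intro q hq
          rw [hQsdef, Finset.mem_filter] at hq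
          obtain ⟨hqNu, hqp, f, hfE, hpf, hqf, h1, h2⟩ := hq
          have heq : edg E p q = f := huniq (fun h => hqp h.symm) hfE hpf hqf
          rw [heq]
          exact ⟨hqNu, hqp, hfE, hpf, hqf, h1, h2⟩
        have hstep1 : (QP.filter (fun pq => pq.1 = p)).card ≤ Qs.card := by
          apply Finset.card_le_card_of_injOn (fun pq => pq.2)
          · rintro ⟨p1, q⟩ hq
            rw [Finset.mem_coe, Finset.mem_filter] at hq
            obtain ⟨hq1, hfst⟩ := hq
            simp only [hQPdef, Finset.mem_filter, Finset.mem_offDiag] at hq1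
            simp only at hfst
            subst hfst
            obtain ⟨⟨-, hqNu, hne⟩, f, hfE, hpf, hqf, h1, h2⟩ := hq1
            rw [hQsdef, Finset.mem_coe, Finset.mem_filter]
            exact ⟨hqNu, Ne.symm hne, f, hfE, hpf, hqf, h1, h2⟩
          · rintro ⟨a1, a2⟩ ha ⟨b1, b2⟩ hb hab
            simp only [Finset.mem_coe, Finset.mem_filter] at ha hb
            simp only at hab
            rw [Prod.mk.injEq]
            exact ⟨ha.2.trans hb.2.symm, hab⟩
        have hsplit := Finset.card_filter_add_card_filter_not
          (s := Qs) (p := fun q => q ∈ edg E u p)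
        have hQ0 : (Qs.filter (fun q => q ∈ edg E u p)).card ≤ k - 2 := by
          calc (Qs.filter (fun q => q ∈ edg E u p)).card
              ≤ (((edg E u p).erase u).erase p).card := by
                apply Finset.card_le_card
                intro q hq
                rw [Finset.mem_filter] at hq
                obtain ⟨hqQs, hqe⟩ := hq
                obtain ⟨hqNu, hqp, -⟩ := hQfact q hqQs
                rw [Finset.mem_erase, Finset.mem_erase]
                exact ⟨hqp, ((hNumem q).mp hqNu).1, hqe⟩
            _ ≤ k - 2 := by
                have hc1 : (((edg E u p).erase u).erase p).card = k - 1 - 1 := by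
                  rw [Finset.card_erase_of_mem (Finset.mem_erase.mpr ⟨hpu, hpp⟩),
                    Finset.card_erase_of_mem hup, hunif _ hpE]
                omega
        have hQ1 : (Qs.filter (fun q => ¬ q ∈ edg E u p)).card ≤ (s-1)*(2*k-3) := by
          set Q1 := Qs.filter (fun q => ¬ q ∈ edg E u p) with hQ1def
          have hQ1fact : ∀ q ∈ Q1, q ∈ Qs ∧ q ∉ edg E u p := by
            intro q hq; rw [hQ1def, Finset.mem_filter] at hq; exact hq
          obtain ⟨S, hSsub, hinj1, hinj2, hcov⟩ :=
            exists_rainbow Q1 (fun q => edg E u q) (fun q => edg E p q)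
          have hScard : S.card ≤ s - 1 := by
            apply book_bound hB (fun h => hpu h.symm) hpE hup hpp S
              (fun q => edg E u q) (fun q => edg E p q) ?_ hinj1 hinj2 ?_
            · intro q hqS
              obtain ⟨hqQs, hqout⟩ := hQ1fact q (hSsub hqS)
              obtain ⟨hqNu, hqp, hpqE, hppq, hqpq, hx1, hx2⟩ := hQfact q hqQs
              obtain ⟨huqE, huuq, hquq⟩ := hNuedge q hqNu
              refine ⟨((hNumem q).mp hqNu).1, hqp, huqE, huuq, hquq, hpqE, hppq, hqpq, ?_, ?_⟩
              · intro h
                apply hqout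
                rw [h]; exact hquq
              · intro h
                apply hqout
                rw [h]; exact hqpq
            · intro q hqS q' hqS' hX
              obtain ⟨hqQs, hqout⟩ := hQ1fact q (hSsub hqS)
              obtain ⟨hqQs', hqout'⟩ := hQ1fact q' (hSsub hqS')
              obtain ⟨hqNu, -, -, -, -, -, -⟩ := hQfact q hqQs
              obtain ⟨-, -, hpqE', hppq', hqpq', -, -⟩ := hQfact q' hqQs'
              obtain ⟨huqE, huuq, hquq⟩ := hNuedge q hqNu
              -- X := edg E u q = edg E p q' contains u and p
              have hXp : p ∈ edg E u q := by rw [hX]; exact hppq'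
              have h1 := huniq (fun h => hpu h.symm) huqE huuq hXp
              -- h1 : edg E u p = edg E u q
              apply hqout
              rw [h1]; exact hquq
          have hQ1card := card_le_of_cover Q1 S
            (fun j => insert j (((edg E u j).erase u).erase j ∪ ((edg E p j).erase p).erase j))
            (2*k-3) ?_ ?_
          · calc Q1.card ≤ S.card * (2*k-3) := hQ1card
              _ ≤ (s-1) * (2*k-3) := Nat.mul_le_mul_right _ hScard
          · intro q hq
            obtain ⟨j, hjS, hcase⟩ := hcov q hq
            refine ⟨j, hjS, ?_⟩
            rw [Finset.mem_insert]
            by_cases hqj : q = j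
            · exact Or.inl hqj
            · right
              rw [Finset.mem_union]
              obtain ⟨hqQs, -⟩ := hQ1fact q hq
              obtain ⟨hqNu, hqp, -, -, hqpq, -, -⟩ := hQfact q hqQs
              obtain ⟨-, -, hquq⟩ := hNuedge q hqNu
              rcases hcase with h | h
              · left
                rw [Finset.mem_erase, Finset.mem_erase]
                exact ⟨hqj, ((hNumem q).mp hqNu).1, h ▸ hquq⟩
              · right
                rw [Finset.mem_erase, Finset.mem_erase]
                exact ⟨hqj, hqp, h ▸ hqpq⟩
          · intro j hjS
            obtain ⟨hjQs, -⟩ := hQ1fact j (hSsub hjS)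
            obtain ⟨hjNu, hjp, hpjE, hppj, hjpj, -, -⟩ := hQfact j hjQs
            obtain ⟨hujE, huu, huj⟩ := hNuedge j hjNu
            have hju : j ≠ u := ((hNumem j).mp hjNu).1
            have hc1 : (((edg E u j).erase u).erase j).card = k - 1 - 1 := by
              rw [Finset.card_erase_of_mem (Finset.mem_erase.mpr ⟨hju, huj⟩),
                Finset.card_erase_of_mem huu, hunif _ hujE]
            have hc2 : (((edg E p j).erase p).erase j).card = k - 1 - 1 := by
              rw [Finset.card_erase_of_mem (Finset.mem_erase.mpr ⟨hjp, hjpj⟩),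
                Finset.card_erase_of_mem hppj, hunif _ hpjE]
            calc (insert j (((edg E u j).erase u).erase j ∪
                  ((edg E p j).erase p).erase j)).card
                ≤ (((edg E u j).erase u).erase j ∪ ((edg E p j).erase p).erase j).card + 1 :=
                  Finset.card_insert_le _ _
              _ ≤ 2*k-3 := by
                  have := Finset.card_union_le (((edg E u j).erase u).erase j)
                    (((edg E p j).erase p).erase j)
                  omega
        omega
      calc ∑ p ∈ Nu, (QP.filter (fun pq => pq.1 = p)).card
          ≤ ∑ _p ∈ Nu, ((s-1)*(2*k-3) + (k-2)) := Finset.sum_le_sum hbound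
        _ = Nu.card * ((s-1)*(2*k-3) + (k-2)) := by rw [Finset.sum_const, smul_eq_mul]
    -- ============ combine everything ============
    have key2 : SP.card * ((s-1)*(2*k-3)) + QP.card * (k-2)
        ≤ Nu.card * (k-2) * (2*((s-1)*(2*k-3)) + (k-2)) := by
      have h1 : SP.card * ((s-1)*(2*k-3)) ≤ (Nu.card * (k-2)) * ((s-1)*(2*k-3)) :=
        Nat.mul_le_mul_right _ hSPcard
      have h2 : QP.card * (k-2) ≤ (Nu.card * ((s-1)*(2*k-3) + (k-2))) * (k-2) :=
        Nat.mul_le_mul_right _ hQPcard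
      calc SP.card * ((s-1)*(2*k-3)) + QP.card * (k-2)
          ≤ (Nu.card * (k-2)) * ((s-1)*(2*k-3))
            + (Nu.card * ((s-1)*(2*k-3) + (k-2))) * (k-2) := add_le_add h1 h2
        _ = Nu.card * (k-2) * (2*((s-1)*(2*k-3)) + (k-2)) := by
            generalize (s-1)*(2*k-3) = b
            generalize k-2 = a
            ring
    calc 2 * (∑ w ∈ D, (Pw w).card)
        ≤ (∑ w ∈ D, 2 * (if w ∈ Nu then s-1 else t-1))
          + (∑ w ∈ D, (SP.filter (fun pq => pq.1 ∈ Pw w ∧ pq.2 ∈ Pw w)).card)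
          + (∑ w ∈ D, (QP.filter (fun pq => pq.1 ∈ Pw w ∧ pq.2 ∈ Pw w ∧
              edg E pq.1 w = edg E pq.2 w)).card) := summed
      _ ≤ (2*(s-1)*Nu.card + 2*(t-1)*((n-1) - Nu.card))
          + SP.card * ((s-1)*(2*k-3)) + QP.card * (k-2) := by
          rw [hmusum]
          exact add_le_add (add_le_add le_rfl hSPsum) hQPsum
      _ ≤ 2*(s-1)*Nu.card + 2*(t-1)*((n-1) - Nu.card)
          + Nu.card * (k-2) * (2*((s-1)*(2*k-3)) + (k-2)) := by
          have := key2
          omega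


  -- ===================== PART 3 : final arithmetic =====================
  have hNuD : Nu ⊆ D := by
    intro j hj
    rw [hDdef, Finset.mem_erase]
    exact ⟨((hNumem j).mp hj).1, Finset.mem_univ j⟩
  have hDcard : D.card = n - 1 := by
    rw [hDdef, Finset.card_erase_of_mem (Finset.mem_univ u), Finset.card_univ,
      Fintype.card_fin]
  have hνn : Nu.card ≤ n - 1 := hDcard ▸ Finset.card_le_card hNuD
  -- real casts
  have hsR : (2:ℝ) ≤ (s:ℝ) := by exact_mod_cast hs
  have htR : (1:ℝ) ≤ (t:ℝ) := by exact_mod_cast ht1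
  have hkR3 : (3:ℝ) ≤ (k:ℝ) := by exact_mod_cast hk
  have hnR : (3:ℝ) ≤ (n:ℝ) := by exact_mod_cast hn
  have hνR : ((Nu.card : ℕ) : ℝ) ≤ (n:ℝ) - 1 := by
    have h1 : ((Nu.card : ℕ) : ℝ) ≤ ((n - 1 : ℕ) : ℝ) := by exact_mod_cast hνn
    have h2 : ((n - 1 : ℕ) : ℝ) = (n:ℝ) - 1 := by
      rw [Nat.cast_sub (by omega), Nat.cast_one]
    linarith [h1, h2.le, h2.ge]
  -- cast the combinatorial bound to ℝ
  have comboR : 2 * ((∑ w ∈ D, (Pw w).card : ℕ) : ℝ)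
      ≤ 2*((s:ℝ)-1)*(Nu.card:ℝ) + 2*((t:ℝ)-1)*(((n:ℝ)-1) - (Nu.card:ℝ))
        + (Nu.card:ℝ) * ((k:ℝ)-2) * (2*(((s:ℝ)-1)*(2*(k:ℝ)-3)) + ((k:ℝ)-2)) := by
    have h := combo
    have hc : (((2*(s-1)*Nu.card + 2*(t-1)*((n-1) - Nu.card)
        + Nu.card * (k-2) * (2*((s-1)*(2*k-3)) + (k-2))) : ℕ) : ℝ)
        = 2*((s:ℝ)-1)*(Nu.card:ℝ) + 2*((t:ℝ)-1)*(((n:ℝ)-1) - (Nu.card:ℝ))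
          + (Nu.card:ℝ) * ((k:ℝ)-2) * (2*(((s:ℝ)-1)*(2*(k:ℝ)-3)) + ((k:ℝ)-2)) := by
      push_cast [Nat.cast_sub (by omega : 1 ≤ s), Nat.cast_sub (by omega : 1 ≤ t),
        Nat.cast_sub (by omega : 2 ≤ k), Nat.cast_sub (by omega : 3 ≤ 2*k),
        Nat.cast_sub hνn, Nat.cast_sub (by omega : 1 ≤ n)]
      ring
    calc 2 * ((∑ w ∈ D, (Pw w).card : ℕ) : ℝ)
        = (((2 * ∑ w ∈ D, (Pw w).card) : ℕ) : ℝ) := by push_cast; ring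
      _ ≤ _ := by
          rw [← hc]
          exact_mod_cast h
  -- key constants
  set C : ℝ := 6 * (k : ℝ) ^ 2 - 15 * (k : ℝ) + 10 with hCdef
  have hC1 : 2*((t:ℝ)-1) ≤ C * ((s:ℝ)-1) := by
    rw [hCdef]; linarith [ht2]
  have hC2 : 2*((k:ℝ)-1) + 2*((s:ℝ)-1)
      + ((k:ℝ)-2) * (2*(((s:ℝ)-1)*(2*(k:ℝ)-3)) + ((k:ℝ)-2)) ≤ C * ((s:ℝ)-1) := by
    rw [hCdef]
    have h1 : (0:ℝ) ≤ (s:ℝ) - 2 := by linarith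
    have h2 : (0:ℝ) ≤ 2*(k:ℝ)^2 - (k:ℝ) - 4 := by nlinarith
    nlinarith [mul_nonneg h1 h2]
  have hCpos : (0:ℝ) ≤ C * ((s:ℝ)-1) := by
    have : 2*((t:ℝ)-1) ≥ 0 := by linarith
    linarith
  -- assemble
  have hXpos : (0:ℝ) ≤ ((n:ℝ)-1) - (Nu.card:ℝ) := by linarith
  have hνpos : (0:ℝ) ≤ (Nu.card:ℝ) := Nat.cast_nonneg _
  have hfin : 2 * (((k:ℝ)-1)^2 * (r*r)) ≤ C * ((s:ℝ)-1) * ((n:ℝ)-1) := by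
    have hstep1 : 2 * (((k:ℝ)-1)^2 * (r*r))
        ≤ 2*((k:ℝ)-1)*(Nu.card:ℝ) + 2 * ((∑ w ∈ D, (Pw w).card : ℕ) : ℝ) := by
      linarith [chain]
    have hstep2 : 2*((t:ℝ)-1)*(((n:ℝ)-1) - (Nu.card:ℝ))
        ≤ C * ((s:ℝ)-1) * (((n:ℝ)-1) - (Nu.card:ℝ)) :=
      mul_le_mul_of_nonneg_right hC1 hXpos
    have hstep3 : (Nu.card:ℝ) * (2*((k:ℝ)-1) + 2*((s:ℝ)-1)
          + ((k:ℝ)-2) * (2*(((s:ℝ)-1)*(2*(k:ℝ)-3)) + ((k:ℝ)-2)))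
        ≤ (Nu.card:ℝ) * (C * ((s:ℝ)-1)) :=
      mul_le_mul_of_nonneg_left hC2 hνpos
    nlinarith [comboR, hstep1, hstep2, hstep3]
  have hdiv : (0:ℝ) < 2 * ((k:ℝ) - 1)^2 := by nlinarith
  rw [le_div_iff₀ hdiv]
  nlinarith [hfin]


end SRB

/-- A connected linear `k`-uniform hypergraph on `n ≥ 3` vertices (`k ≥ 3`) with no
Berge-`B_s` and no Berge-`K_{2,t}` (`s ≥ 2`, `1 ≤ t ≤ (6k²-15k+10)(s-1)/2 + 1`) has
spectral radius at most `√((6k²-15k+10)(s-1)(n-1)/(2(k-1)²))`. -/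
theorem specRad_bound_book_k2t (n k s t : ℕ) (hn : 3 ≤ n) (hk : 3 ≤ k)
    (hs : 2 ≤ s) (ht1 : 1 ≤ t)
    (ht2 : (t : ℝ) ≤ (6 * (k : ℝ) ^ 2 - 15 * (k : ℝ) + 10) * ((s : ℝ) - 1) / 2 + 1)
    (E : Finset (Finset (Fin n)))
    (hunif : ∀ e ∈ E, e.card = k)
    (hlin : ∀ e ∈ E, ∀ f ∈ E, e ≠ f → (e ∩ f).card ≤ 1)
    (hconn : ∀ u v : Fin n,
      Relation.ReflTransGen (fun a b => ∃ e ∈ E, a ∈ e ∧ b ∈ e) u v)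
    (hB : BergeBookFree E s) (hK : BergeK2tFree E t) :
    specRad n k (adjT n k E)
      ≤ Real.sqrt ((6 * (k : ℝ) ^ 2 - 15 * (k : ℝ) + 10) * ((s : ℝ) - 1)
          * ((n : ℝ) - 1) / (2 * ((k : ℝ) - 1) ^ 2)) := by
  apply Real.sSup_le ?_ (Real.sqrt_nonneg _)
  rintro r ⟨lam, ⟨x, hx0, heig⟩, rfl⟩
  have heig' : ∀ i, ‖lam‖ * ‖x i‖ ^ (k-1)
      ≤ ∑ e ∈ E.filter (fun e => i ∈ e), ∏ j ∈ e.erase i, ‖x j‖ := by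
    intro i
    have h1 := heig i
    rw [SRB.tensor_sum_eq hk E hunif x i] at h1
    calc ‖lam‖ * ‖x i‖ ^ (k-1)
        = ‖lam * x i ^ (k-1)‖ := by rw [norm_mul, norm_pow]
      _ = ‖∑ e ∈ E.filter (fun e => i ∈ e), ∏ j ∈ e.erase i, x j‖ := by rw [h1]
      _ ≤ ∑ e ∈ E.filter (fun e => i ∈ e), ‖∏ j ∈ e.erase i, x j‖ :=
          norm_sum_le _ _
      _ = ∑ e ∈ E.filter (fun e => i ∈ e), ∏ j ∈ e.erase i, ‖x j‖ :=
          Finset.sum_congr rfl (fun e _ => norm_prod _ _)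
  obtain ⟨u, -, humax⟩ := Finset.exists_max_image Finset.univ (fun i => ‖x i‖)
    ⟨⟨0, by omega⟩, Finset.mem_univ _⟩
  have hxu : 0 < ‖x u‖ := by
    rcases (norm_nonneg (x u)).lt_or_eq with h | h
    · exact h
    · exfalso
      apply hx0
      funext i
      have h1 := humax i (Finset.mem_univ i)
      rw [← h] at h1
      have h2 : ‖x i‖ = 0 := le_antisymm h1 (norm_nonneg _)
      simpa using norm_eq_zero.mp h2
  set y : Fin n → ℝ := fun i => ‖x i‖ / ‖x u‖ with hydef
  have hy0 : ∀ i, 0 ≤ y i := fun i => div_nonneg (norm_nonneg _) (norm_nonneg _)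
  have hy1 : ∀ i, y i ≤ 1 := fun i => (div_le_one hxu).mpr (humax i (Finset.mem_univ i))
  have hyu : y u = 1 := div_self (ne_of_gt hxu)
  have EIG : ∀ i, ‖lam‖ * y i ^ (k-1)
      ≤ ∑ e ∈ E.filter (fun e => i ∈ e), ∏ j ∈ e.erase i, y j := by
    intro i
    have h1 := heig' i
    have hpow : (0:ℝ) < ‖x u‖ ^ (k-1) := pow_pos hxu _
    have hrw : ∀ e ∈ E.filter (fun e => i ∈ e),
        (∏ j ∈ e.erase i, y j)
        = (∏ j ∈ e.erase i, ‖x j‖) / ‖x u‖ ^ (k-1) := by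
      intro e he
      rw [Finset.mem_filter] at he
      rw [hydef]
      rw [Finset.prod_div_distrib, Finset.prod_const,
        Finset.card_erase_of_mem he.2, hunif _ he.1]
    rw [Finset.sum_congr rfl hrw, ← Finset.sum_div]
    have hylam : ‖lam‖ * y i ^ (k-1)
        = ‖lam‖ * ‖x i‖ ^ (k-1) / ‖x u‖ ^ (k-1) := by
      rw [hydef]
      rw [div_pow, mul_div_assoc]
    rw [hylam]
    exact div_le_div_of_nonneg_right h1 hpow.le
  rw [← Real.sqrt_sq (norm_nonneg lam)]
  apply Real.sqrt_le_sqrt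
  exact SRB.key k s t hn hk hs ht1 ht2 E hunif hlin hB hK (‖lam‖)
    (norm_nonneg lam) y u hy0 hy1 hyu EIG
end

section
/- Let A be a nonnegative weakly irreducible tensor of order k and dimension n. Then the spectral radius ρ(A) is an eigenvalue of A with a strictly positive eigenvector, unique up to positive scaling. -/
attribute [local instance] Classical.propDecidable

namespace PF
variable {n m : ℕ}

noncomputable def Fm (A : Fin n → (Fin m → Fin n) → ℝ) (x : Fin n → ℝ) (i : Fin n) : ℝ :=
  ∑ p : Fin m → Fin n, A i p * ∏ j, x (p j)

lemma Fm_nonneg {A : Fin n → (Fin m → Fin n) → ℝ} (hA : ∀ i p, 0 ≤ A i p)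
    {x : Fin n → ℝ} (hx : ∀ j, 0 ≤ x j) (i : Fin n) : 0 ≤ Fm A x i :=
  Finset.sum_nonneg fun p _ => mul_nonneg (hA i p) (Finset.prod_nonneg fun j _ => hx _)

lemma Fm_mono {A : Fin n → (Fin m → Fin n) → ℝ} (hA : ∀ i p, 0 ≤ A i p) {x y : Fin n → ℝ}
    (hx : ∀ j, 0 ≤ x j) (hxy : ∀ j, x j ≤ y j) (i : Fin n) : Fm A x i ≤ Fm A y i :=
  Finset.sum_le_sum fun p _ => mul_le_mul_of_nonneg_left
    (Finset.prod_le_prod (fun j _ => hx _) fun j _ => hxy _) (hA i p)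

lemma Fm_smul {A : Fin n → (Fin m → Fin n) → ℝ} (x : Fin n → ℝ) (c : ℝ) (i : Fin n) :
    Fm A (fun j => c * x j) i = c ^ m * Fm A x i := by
  simp only [Fm, Finset.mul_sum]
  refine Finset.sum_congr rfl fun p _ => ?_
  rw [Finset.prod_mul_distrib, Finset.prod_const]
  simp only [Finset.card_univ, Fintype.card_fin]
  ring

lemma Fm_continuous (A : Fin n → (Fin m → Fin n) → ℝ) (i : Fin n) :
    Continuous fun x : Fin n → ℝ => Fm A x i := by
  unfold Fm
  exact continuous_finset_sum _ fun p _ =>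
    (continuous_const.mul (continuous_finset_prod _ fun j _ => continuous_apply (p j)))

lemma prod_lower {x : Fin n → ℝ} {y : ℝ} (hy : 0 ≤ y) (hx : ∀ j, y ≤ x j)
    (p : Fin m → Fin n) (m0 : Fin m) :
    y ^ (m - 1) * x (p m0) ≤ ∏ j, x (p j) := by
  rw [← Finset.mul_prod_erase Finset.univ _ (Finset.mem_univ m0),
    mul_comm (y ^ (m - 1)) (x (p m0))]
  refine mul_le_mul_of_nonneg_left ?_ (le_trans hy (hx _))
  calc y ^ (m - 1) = ∏ _j ∈ Finset.univ.erase m0, y := by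
        rw [Finset.prod_const, Finset.card_erase_of_mem (Finset.mem_univ m0),
          Finset.card_univ, Fintype.card_fin]
      _ ≤ ∏ j ∈ Finset.univ.erase m0, x (p j) :=
        Finset.prod_le_prod (fun _ _ => hy) fun j _ => hx _

lemma coord_le_one {x : Fin n → ℝ} (hx : ∀ j, 0 ≤ x j) (hs : ∑ j, x j = 1) (i : Fin n) :
    x i ≤ 1 := hs ▸ Finset.single_le_sum (fun j _ => hx j) (Finset.mem_univ i)

lemma exists_big_coord (hn : 1 ≤ n) {x : Fin n → ℝ} (hs : ∑ j, x j = 1) :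
    ∃ i, 1 / (n : ℝ) ≤ x i := by
  by_contra h
  push_neg at h
  have hne : (Finset.univ : Finset (Fin n)).Nonempty := by
    haveI : NeZero n := ⟨by omega⟩; exact Finset.univ_nonempty
  have := Finset.sum_lt_sum_of_nonempty hne (fun i _ => h i)
  rw [hs, Finset.sum_const, Finset.card_univ, Fintype.card_fin] at this
  have hn' : (0:ℝ) < n := by positivity
  rw [nsmul_eq_mul, mul_one_div, div_self (ne_of_gt hn')] at this
  exact lt_irrefl _ this

/-- Any Collatz-Wielandt feasible value is at most `B A`. -/
lemma t_le_B (hn : 1 ≤ n) {A : Fin n → (Fin m → Fin n) → ℝ} (hA : ∀ i p, 0 ≤ A i p)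
    {t : ℝ} {x : Fin n → ℝ} (ht : 0 ≤ t) (hx : ∀ j, 0 ≤ x j) (hs : ∑ j, x j = 1)
    (hf : ∀ i, t * x i ^ m ≤ Fm A x i) :
    t ≤ (n : ℝ) ^ m * ∑ i, ∑ p, A i p := by
  obtain ⟨i, hi⟩ := exists_big_coord hn hs
  have hn' : (0:ℝ) < n := by positivity
  have h1 : t * (1 / n) ^ m ≤ t * x i ^ m := by
    have := pow_le_pow_left₀ (by positivity) hi m
    exact mul_le_mul_of_nonneg_left this ht
  have h2 : Fm A x i ≤ ∑ p, A i p := by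
    have hple : ∀ p : Fin m → Fin n, A i p * ∏ j, x (p j) ≤ A i p := fun p => by
      have hp1 : (∏ j, x (p j)) ≤ 1 :=
        Finset.prod_le_one (fun j _ => hx (p j)) fun j _ => coord_le_one hx hs (p j)
      calc A i p * ∏ j, x (p j) ≤ A i p * 1 := mul_le_mul_of_nonneg_left hp1 (hA i p)
        _ = A i p := mul_one _
    exact Finset.sum_le_sum fun p _ => hple p
  have h3 : (∑ p, A i p) ≤ ∑ i', ∑ p, A i' p :=
    Finset.single_le_sum (fun i' _ => Finset.sum_nonneg fun p _ => hA i' p) (Finset.mem_univ i)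
  have h4 : t * (1 / n) ^ m ≤ ∑ i', ∑ p, A i' p := le_trans h1 (le_trans (hf i) (le_trans h2 h3))
  have h5 : t * (1 / n) ^ m = t / (n : ℝ) ^ m := by rw [div_pow, one_pow, mul_one_div]
  rw [h5, div_le_iff₀ (by positivity)] at h4
  linarith [h4]

def KK (A : Fin n → (Fin m → Fin n) → ℝ) (B : ℝ) : Set (ℝ × (Fin n → ℝ)) :=
  {q | 0 ≤ q.1 ∧ q.1 ≤ B ∧ (∀ i, 0 ≤ q.2 i) ∧ (∑ i, q.2 i) = 1 ∧
    ∀ i, q.1 * q.2 i ^ m ≤ Fm A q.2 i}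

lemma isCompact_KK (A : Fin n → (Fin m → Fin n) → ℝ) (B : ℝ) : IsCompact (KK A B) := by
  have hsub : KK A B ⊆ Set.Icc 0 B ×ˢ Set.Icc (0 : Fin n → ℝ) 1 := by
    rintro ⟨t, x⟩ ⟨h1, h2, h3, h4, _⟩
    exact ⟨⟨h1, h2⟩, fun i => h3 i, fun i => coord_le_one h3 h4 i⟩
  have hcl : IsClosed (KK A B) := by
    have c1 : IsClosed {q : ℝ × (Fin n → ℝ) | 0 ≤ q.1} := isClosed_le continuous_const continuous_fst
    have c2 : IsClosed {q : ℝ × (Fin n → ℝ) | q.1 ≤ B} := isClosed_le continuous_fst continuous_const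
    have c3 : IsClosed {q : ℝ × (Fin n → ℝ) | ∀ i, 0 ≤ q.2 i} := by
      rw [Set.setOf_forall]
      exact isClosed_iInter fun i =>
        isClosed_le continuous_const ((continuous_apply i).comp continuous_snd)
    have c4 : IsClosed {q : ℝ × (Fin n → ℝ) | (∑ i, q.2 i) = 1} :=
      isClosed_eq (continuous_finset_sum _ fun i _ => (continuous_apply i).comp continuous_snd)
        continuous_const
    have c5 : IsClosed {q : ℝ × (Fin n → ℝ) | ∀ i, q.1 * q.2 i ^ m ≤ Fm A q.2 i} := by
      rw [Set.setOf_forall]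
      refine isClosed_iInter fun i => isClosed_le ?_ ((Fm_continuous A i).comp continuous_snd)
      exact continuous_fst.mul (((continuous_apply i).comp continuous_snd).pow m)
    have : KK A B = ({q : ℝ × (Fin n → ℝ) | 0 ≤ q.1} ∩ {q | q.1 ≤ B} ∩ {q | ∀ i, 0 ≤ q.2 i}
        ∩ {q | (∑ i, q.2 i) = 1} ∩ {q | ∀ i, q.1 * q.2 i ^ m ≤ Fm A q.2 i}) := by
      ext q; constructor
      · rintro ⟨h1, h2, h3, h4, h5⟩; exact ⟨⟨⟨⟨h1, h2⟩, h3⟩, h4⟩, h5⟩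
      · rintro ⟨⟨⟨⟨h1, h2⟩, h3⟩, h4⟩, h5⟩; exact ⟨h1, h2, h3, h4, h5⟩
    rw [this]
    exact (((c1.inter c2).inter c3).inter c4).inter c5
  exact ((isCompact_Icc.prod isCompact_Icc).of_isClosed_subset hcl hsub)

lemma pos_eigen (hn : 1 ≤ n) (hm : 1 ≤ m) (A : Fin n → (Fin m → Fin n) → ℝ)
    (hA : ∀ i p, 0 < A i p) :
    ∃ (μ : ℝ) (x : Fin n → ℝ), 0 ≤ μ ∧ (∀ i, 0 < x i) ∧ (∑ i, x i) = 1 ∧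
      ∀ i, Fm A x i = μ * x i ^ m := by
  haveI : NeZero n := ⟨by omega⟩
  have hA' : ∀ i p, 0 ≤ A i p := fun i p => (hA i p).le
  set B : ℝ := (n : ℝ) ^ m * ∑ i, ∑ p, A i p with hBdef
  have hB0 : 0 ≤ B := by
    apply mul_nonneg (by positivity)
    exact Finset.sum_nonneg fun i _ => Finset.sum_nonneg fun p _ => hA' i p
  -- maximizer over KK
  have hKne : (KK A B (n := n) (m := m)).Nonempty := by
    refine ⟨(0, fun _ => 1 / n), le_refl _, hB0, fun i => by positivity, ?_, fun i => ?_⟩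
    · rw [Finset.sum_const, Finset.card_univ, Fintype.card_fin, nsmul_eq_mul,
        mul_one_div, div_self (Nat.cast_ne_zero.2 (by omega) : (n:ℝ) ≠ 0)]
    · simpa using Fm_nonneg hA' (fun j => by positivity) i
  obtain ⟨⟨μ, x⟩, hqK, hmax⟩ :=
    (isCompact_KK A B).exists_isMaxOn hKne continuous_fst.continuousOn
  obtain ⟨hμ0, hμB, hx0, hxs, hfeas⟩ := hqK
  dsimp only at hμ0 hμB hx0 hxs hfeas
  have hmax' : ∀ t y, (t, y) ∈ KK A B (n := n) (m := m) → t ≤ μ := fun t y h => hmax h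
  -- least entry of A
  obtain ⟨i0', hi0'⟩ : ∃ i : Fin n, True := ⟨⟨0, by omega⟩, trivial⟩
  set Aset : Finset ℝ :=
    Finset.image (fun q : Fin n × (Fin m → Fin n) => A q.1 q.2) Finset.univ with hAset
  have hAsetne : Aset.Nonempty := ⟨A i0' (fun _ => i0'),
    Finset.mem_image.2 ⟨(i0', fun _ => i0'), Finset.mem_univ _, rfl⟩⟩
  set a0 : ℝ := Aset.min' hAsetne with ha0def
  have ha0le : ∀ i p, a0 ≤ A i p := fun i p =>
    Finset.min'_le _ _ (Finset.mem_image.2 ⟨(i, p), Finset.mem_univ _, rfl⟩)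
  have ha0pos : 0 < a0 := by
    obtain ⟨q, _, hq⟩ := Finset.mem_image.1 (Finset.min'_mem _ hAsetne)
    rw [ha0def, ← hq]; exact hA q.1 q.2
  -- fix the zeros of x
  set δ : ℝ := min 1 (a0 * (1 / n) ^ m / (B + 1)) with hδdef
  have hδ0 : 0 < δ := lt_min one_pos (by positivity)
  have hδ1 : δ ≤ 1 := min_le_left _ _
  set xp : Fin n → ℝ := fun i => if x i = 0 then δ else x i with hxpdef
  have hxp_pos : ∀ i, 0 < xp i := fun i => by
    by_cases h : x i = 0 <;> simp [hxpdef, h]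
    · exact hδ0
    · exact lt_of_le_of_ne (hx0 i) (Ne.symm h)
  have hxp_ge : ∀ i, x i ≤ xp i := fun i => by
    by_cases h : x i = 0 <;> simp [hxpdef, h]
    exact hδ0.le
  have hδm : μ * δ ^ m ≤ a0 * (1 / n) ^ m := by
    have h1 : δ ^ m ≤ δ := pow_le_of_le_one hδ0.le hδ1 (by omega)
    have h2 : μ * δ ^ m ≤ (B + 1) * δ := by
      apply mul_le_mul (by linarith) h1 (by positivity) (by linarith)
    have h3 : (B + 1) * δ ≤ a0 * (1 / n) ^ m := by
      have := min_le_right (1:ℝ) (a0 * (1 / n) ^ m / (B + 1))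
      calc (B + 1) * δ ≤ (B + 1) * (a0 * (1 / n) ^ m / (B + 1)) := by
            apply mul_le_mul_of_nonneg_left this (by linarith)
        _ = a0 * (1 / n) ^ m := by
            rw [mul_comm, div_mul_cancel₀ _ (ne_of_gt (by linarith : (0:ℝ) < B + 1))]
    linarith
  have hfeasp : ∀ i, μ * xp i ^ m ≤ Fm A xp i := by
    intro i
    by_cases h : x i = 0
    · have hxpi : xp i = δ := by simp [hxpdef, h]
      obtain ⟨j, hj⟩ := exists_big_coord hn hxs
      have hxj : x j ≠ 0 := by
        intro hc; rw [hc] at hj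
        have : (0:ℝ) < 1 / n := by positivity
        linarith
      have hxpj : xp j = x j := by simp [hxpdef, hxj]
      have hterm : a0 * (1 / n) ^ m ≤ Fm A xp i := by
        have h1 : A i (fun _ => j) * ∏ _j' : Fin m, xp j ≤ Fm A xp i := by
          have := Finset.single_le_sum
            (f := fun p : Fin m → Fin n => A i p * ∏ j', xp (p j'))
            (fun p _ => mul_nonneg (hA' i p) (Finset.prod_nonneg fun _ _ => (hxp_pos _).le))
            (Finset.mem_univ (fun _ => j))
          simpa [Fm] using this
        have h2 : a0 * (1 / n) ^ m ≤ A i (fun _ => j) * ∏ _j' : Fin m, xp j := by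
          rw [Finset.prod_const, Finset.card_univ, Fintype.card_fin]
          apply mul_le_mul (ha0le _ _) ?_ (by positivity) (hA' _ _)
          rw [hxpj]
          exact pow_le_pow_left₀ (by positivity) hj m
        linarith
      rw [hxpi]
      linarith
    · have hxpi : xp i = x i := by simp [hxpdef, h]
      rw [hxpi]
      exact le_trans (hfeas i) (Fm_mono hA' hx0 hxp_ge i)
  -- normalize
  set S : ℝ := ∑ i, xp i with hSdef
  have hSpos : 0 < S := by
    have h1 : (1:ℝ) = ∑ i, x i := hxs.symm
    have h2 : (∑ i, x i) ≤ S := Finset.sum_le_sum fun i _ => hxp_ge i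
    linarith
  set x1 : Fin n → ℝ := fun i => S⁻¹ * xp i with hx1def
  have hx1pos : ∀ i, 0 < x1 i := fun i => mul_pos (inv_pos.2 hSpos) (hxp_pos i)
  have hx1sum : ∑ i, x1 i = 1 := by
    rw [hx1def, ← Finset.mul_sum, ← hSdef, inv_mul_cancel₀ (ne_of_gt hSpos)]
  have hfeas1 : ∀ i, μ * x1 i ^ m ≤ Fm A x1 i := by
    intro i
    have := Fm_smul (A := A) xp S⁻¹ i
    rw [hx1def, this]
    have : μ * (S⁻¹ * xp i) ^ m = (S⁻¹) ^ m * (μ * xp i ^ m) := by ring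
    rw [this]
    exact mul_le_mul_of_nonneg_left (hfeasp i) (by positivity)
  have hx1K : (μ, x1) ∈ KK A B (n := n) (m := m) :=
    ⟨hμ0, hμB, fun i => (hx1pos i).le, hx1sum, hfeas1⟩
  refine ⟨μ, x1, hμ0, hx1pos, hx1sum, fun i => ?_⟩
  by_contra hne
  have hlt : μ * x1 i ^ m < Fm A x1 i := lt_of_le_of_ne (hfeas1 i) fun h => hne h.symm
  -- choose δ2
  have hcont : Continuous fun d : ℝ => μ * (x1 i + d) ^ m :=
    continuous_const.mul ((continuous_const.add continuous_id).pow m)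
  have htend : Filter.Tendsto (fun d : ℝ => μ * (x1 i + d) ^ m) (nhds 0)
      (nhds (μ * x1 i ^ m)) := by
    have := hcont.tendsto 0
    simpa using this
  have hev := htend.eventually_lt_const hlt
  rw [Metric.eventually_nhds_iff] at hev
  obtain ⟨ε, hε0, hε⟩ := hev
  set δ2 : ℝ := ε / 2 with hδ2def
  have hδ2pos : 0 < δ2 := by positivity
  have hlt2 : μ * (x1 i + δ2) ^ m < Fm A x1 i := by
    apply hε
    rw [Real.dist_eq, sub_zero, abs_of_pos hδ2pos]
    linarith
  set x2 : Fin n → ℝ := fun j => if j = i then x1 i + δ2 else x1 j with hx2def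
  have hx2pos : ∀ j, 0 < x2 j := fun j => by
    by_cases h : j = i <;> simp [hx2def, h]
    · linarith [hx1pos i]
    · exact hx1pos j
  have hx2ge : ∀ j, x1 j ≤ x2 j := fun j => by
    by_cases h : j = i <;> simp [hx2def, h]
    linarith [hδ2pos]
  have key : ∀ j, μ * x2 j ^ m < Fm A x2 j := by
    intro j
    by_cases h : j = i
    · subst h
      have hx2j : x2 j = x1 j + δ2 := by simp [hx2def]
      rw [hx2j]
      calc μ * (x1 j + δ2) ^ m < Fm A x1 j := hlt2
        _ ≤ Fm A x2 j := Fm_mono hA' (fun l => (hx1pos l).le) hx2ge j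
    · have hx2j : x2 j = x1 j := by simp [hx2def, h]
      have hstrict : Fm A x1 j < Fm A x2 j := by
        apply Finset.sum_lt_sum
        · intro p _
          exact mul_le_mul_of_nonneg_left
            (Finset.prod_le_prod (fun l _ => (hx1pos _).le) fun l _ => hx2ge _) (hA' j p)
        · refine ⟨fun _ => i, Finset.mem_univ _, ?_⟩
          have e1 : (∏ j' : Fin m, x1 i) = x1 i ^ m := by
            rw [Finset.prod_const, Finset.card_univ, Fintype.card_fin]
          have e2 : (∏ j' : Fin m, x2 i) = (x1 i + δ2) ^ m := by
            rw [Finset.prod_const, Finset.card_univ, Fintype.card_fin]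
            congr 1
            simp [hx2def]
          rw [e1, e2]
          apply mul_lt_mul_of_pos_left _ (hA j _)
          apply pow_lt_pow_left₀ _ (hx1pos i).le (by omega)
          linarith
      calc μ * x2 j ^ m = μ * x1 j ^ m := by rw [hx2j]
        _ ≤ Fm A x1 j := hfeas1 j
        _ < Fm A x2 j := hstrict
  -- min ratio
  obtain ⟨i1, _, hi1min⟩ := Finset.exists_min_image Finset.univ
    (fun j => Fm A x2 j / x2 j ^ m) ⟨i, Finset.mem_univ i⟩
  set t' : ℝ := Fm A x2 i1 / x2 i1 ^ m with ht'def
  have hμt : μ < t' := (lt_div_iff₀ (pow_pos (hx2pos i1) m)).2 (key i1)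
  have hfeas2 : ∀ j, t' * x2 j ^ m ≤ Fm A x2 j := by
    intro j
    have h1 : t' ≤ Fm A x2 j / x2 j ^ m := hi1min j (Finset.mem_univ j)
    rw [le_div_iff₀ (pow_pos (hx2pos j) m)] at h1
    linarith
  -- normalize x2
  set S2 : ℝ := ∑ j, x2 j with hS2def
  have hS2pos : 0 < S2 := Finset.sum_pos (fun j _ => hx2pos j) ⟨i, Finset.mem_univ i⟩
  set x3 : Fin n → ℝ := fun j => S2⁻¹ * x2 j with hx3def
  have hx3sum : ∑ j, x3 j = 1 := by
    rw [hx3def, ← Finset.mul_sum, ← hS2def, inv_mul_cancel₀ (ne_of_gt hS2pos)]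
  have hfeas3 : ∀ j, t' * x3 j ^ m ≤ Fm A x3 j := by
    intro j
    rw [hx3def, Fm_smul]
    have : t' * (S2⁻¹ * x2 j) ^ m = (S2⁻¹) ^ m * (t' * x2 j ^ m) := by ring
    rw [this]
    exact mul_le_mul_of_nonneg_left (hfeas2 j) (by positivity)
  have ht'B : t' ≤ B :=
    t_le_B hn hA' (le_trans hμ0 hμt.le) (fun j => (mul_pos (inv_pos.2 hS2pos) (hx2pos j)).le)
      hx3sum hfeas3
  have : t' ≤ μ := hmax' t' x3 ⟨le_trans hμ0 hμt.le, ht'B,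
    fun j => (mul_pos (inv_pos.2 hS2pos) (hx2pos j)).le, hx3sum, hfeas3⟩
  linarith

def Edge (A : Fin n → (Fin m → Fin n) → ℝ) (i u : Fin n) : Prop :=
  ∃ p, 0 < A i p ∧ ∃ m0, p m0 = u

def ReachLe (A : Fin n → (Fin m → Fin n) → ℝ) : ℕ → Fin n → Fin n → Prop
  | 0, i, j => i = j
  | (L+1), i, j => i = j ∨ ∃ u, Edge A i u ∧ ReachLe A L u j

lemma reach_refl (A : Fin n → (Fin m → Fin n) → ℝ) (L : ℕ) (i : Fin n) : ReachLe A L i i := by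
  cases L with
  | zero => rfl
  | succ L => exact Or.inl rfl

lemma reach_univ (hn : 1 ≤ n) (A : Fin n → (Fin m → Fin n) → ℝ)
    (hwi : ∀ I : Finset (Fin n), I.Nonempty → I ≠ Finset.univ →
      ∃ i ∈ I, ∃ p : Fin m → Fin n, 0 < A i p ∧ ∃ m0, p m0 ∉ I) :
    ∀ i j, ReachLe A n i j := by
  haveI : NeZero n := ⟨by omega⟩
  intro i j
  set S : ℕ → Finset (Fin n) := fun L => Finset.univ.filter (fun i => ReachLe A L i j)
    with hSdef
  have hmono : ∀ L, S L ⊆ S (L + 1) := by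
    intro L
    have : ∀ L i, ReachLe A L i j → ReachLe A (L+1) i j := by
      intro L
      induction L with
      | zero => intro i h; exact Or.inl h
      | succ L ih =>
        rintro i (h | ⟨u, hu, hr⟩)
        · exact Or.inl h
        · exact Or.inr ⟨u, hu, ih u hr⟩
    intro a ha
    rw [hSdef, Finset.mem_filter] at ha ⊢
    exact ⟨ha.1, this L a ha.2⟩
  have hjS : ∀ L, j ∈ S L := fun L => by
    rw [hSdef, Finset.mem_filter]; exact ⟨Finset.mem_univ _, reach_refl A L j⟩
  have hcard : ∀ L, S L = Finset.univ ∨ L + 1 ≤ (S L).card := by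
    intro L
    induction L with
    | zero =>
      right; exact Finset.card_pos.2 ⟨j, hjS 0⟩
    | succ L ih =>
      by_cases hU : S L = Finset.univ
      · left
        apply Finset.eq_univ_of_forall
        intro a
        exact hmono L (hU ▸ Finset.mem_univ a)
      · have hcardL : L + 1 ≤ (S L).card := ih.resolve_left hU
        by_cases hU' : S (L+1) = Finset.univ
        · left; exact hU'
        · right
          -- find a new element via hwi
          have hcne : ((S L)ᶜ : Finset (Fin n)).Nonempty := by
            rw [← Finset.card_pos, Finset.card_compl]
            have : (S L).card < Fintype.card (Fin n) :=
              lt_of_le_of_ne (Finset.card_le_univ _)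
                (fun h => hU (Finset.eq_univ_of_card _ (by simpa using h)))
            omega
          have hcnu : ((S L)ᶜ : Finset (Fin n)) ≠ Finset.univ := by
            intro h
            have := hjS L
            have : j ∈ ((S L)ᶜ : Finset (Fin n)) := h ▸ Finset.mem_univ j
            rw [Finset.mem_compl] at this
            exact this (hjS L)
          obtain ⟨a, haC, p, hp, m0, hm0⟩ := hwi _ hcne hcnu
          rw [Finset.mem_compl] at haC
          rw [Finset.notMem_compl] at hm0
          have haS : a ∈ S (L+1) := by
            rw [hSdef, Finset.mem_filter]
            refine ⟨Finset.mem_univ _, Or.inr ⟨p m0, ⟨p, hp, m0, rfl⟩, ?_⟩⟩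
            have := hm0
            rw [hSdef, Finset.mem_filter] at this
            exact this.2
          have hss : S L ⊂ S (L+1) := ⟨hmono L, fun h => haC (h haS)⟩
          have := Finset.card_lt_card hss
          omega
  have hfin : S n = Finset.univ := by
    rcases hcard n with h | h
    · exact h
    · exfalso
      have : (S n).card ≤ n := by simpa using Finset.card_le_univ (S n)
      omega
  have : i ∈ S n := hfin ▸ Finset.mem_univ i
  rw [hSdef, Finset.mem_filter] at this
  exact this.2

lemma geom_id (mm : ℕ) : ∀ L, mm * (∑ s ∈ Finset.range L, (mm+1)^s) + 1 = (mm+1)^L := by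
  intro L
  induction L with
  | zero => simp
  | succ L ih =>
    rw [Finset.sum_range_succ, Nat.mul_add]
    have h2 : mm * (∑ s ∈ Finset.range L, (mm+1)^s) + mm * (mm+1)^L + 1
        = (mm+1)^L + mm * (mm+1)^L := by rw [← ih]; ring
    rw [h2, pow_succ]; ring

lemma min_entry_lb (hn : 1 ≤ n) {mm : ℕ} (A : Fin n → (Fin (mm+1) → Fin n) → ℝ)
    (hwi : ∀ I : Finset (Fin n), I.Nonempty → I ≠ Finset.univ →
      ∃ i ∈ I, ∃ p : Fin (mm+1) → Fin n, 0 < A i p ∧ ∃ m0, p m0 ∉ I)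
    {x : Fin n → ℝ} (hx : ∀ i, 0 < x i) (hxs : ∑ i, x i = 1)
    {c : ℝ} (hc0 : 0 < c) (hc1 : c ≤ 1)
    {iy : Fin n} (hiy : ∀ j, x iy ≤ x j)
    (hkey : ∀ i u, Edge A i u → c * x iy ^ mm * x u ≤ x i ^ (mm+1)) :
    ∀ j, c ^ (∑ s ∈ Finset.range n, (mm+1)^s) * (1/(n:ℝ)) ≤ x j := by
  set y : ℝ := x iy with hydef
  have hy0 : 0 < y := hx iy
  have hy1 : y ≤ 1 := coord_le_one (fun i => (hx i).le) hxs iy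
  have hcy0 : 0 < c * y ^ mm := mul_pos hc0 (pow_pos hy0 mm)
  have hcy1 : c * y ^ mm ≤ 1 := by
    calc c * y ^ mm ≤ 1 * 1 := by
          apply mul_le_mul hc1 (pow_le_one₀ hy0.le hy1) (pow_pos hy0 mm).le one_pos.le
      _ = 1 := mul_one 1
  -- main induction
  have main : ∀ L i j, ReachLe A L i j →
      (c * y ^ mm) ^ (∑ s ∈ Finset.range L, (mm+1)^s) * x j ≤ x i ^ ((mm+1)^L) := by
    intro L
    induction L with
    | zero =>
      intro i j hij
      cases hij
      simp
    | succ L ih =>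
      intro i j hr
      have hiy_le : ∀ a, (c * y ^ mm) ^ (∑ s ∈ Finset.range (L+1), (mm+1)^s) * x a
          ≤ x a ^ ((mm+1)^(L+1)) → True := fun _ _ => trivial
      rcases hr with h | ⟨u, hu, hrest⟩
      · subst h
        -- diagonal case
        have e1 : (mm+1)^(L+1) = mm * (∑ s ∈ Finset.range (L+1), (mm+1)^s) + 1 :=
          (geom_id mm (L+1)).symm
        set g := ∑ s ∈ Finset.range (L+1), (mm+1)^s with hgdef
        rw [e1, pow_succ, pow_mul]
        have h1 : (c * y ^ mm) ^ g ≤ (y ^ mm) ^ g := by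
          apply pow_le_pow_left₀ hcy0.le
          calc c * y ^ mm ≤ 1 * y ^ mm :=
                mul_le_mul_of_nonneg_right hc1 (pow_pos hy0 mm).le
            _ = y ^ mm := one_mul _
        have h2 : (y ^ mm) ^ g ≤ (x i ^ mm) ^ g := by
          apply pow_le_pow_left₀ (pow_nonneg hy0.le _)
          exact pow_le_pow_left₀ hy0.le (hiy i) mm
        exact mul_le_mul_of_nonneg_right (le_trans h1 h2) (hx i).le
      · -- edge case
        have hstep : c * y ^ mm * x u ≤ x i ^ (mm+1) := hkey i u hu
        have hrec := ih u j hrest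
        have h1 : (x i ^ (mm+1)) ^ ((mm+1)^L) = x i ^ ((mm+1)^(L+1)) := by
          rw [← pow_mul, ← pow_succ']
        calc (c * y ^ mm) ^ (∑ s ∈ Finset.range (L+1), (mm+1)^s) * x j
            = (c * y ^ mm) ^ ((mm+1)^L) * ((c * y ^ mm) ^ (∑ s ∈ Finset.range L, (mm+1)^s) * x j) := by
              rw [Finset.sum_range_succ, pow_add]
              ring
          _ ≤ (c * y ^ mm) ^ ((mm+1)^L) * x u ^ ((mm+1)^L) := by
              apply mul_le_mul_of_nonneg_left hrec (pow_nonneg hcy0.le _)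
          _ = (c * y ^ mm * x u) ^ ((mm+1)^L) := (mul_pow _ _ _).symm
          _ ≤ (x i ^ (mm+1)) ^ ((mm+1)^L) := by
              apply pow_le_pow_left₀ (mul_pos hcy0 (hx u)).le hstep
          _ = x i ^ ((mm+1)^(L+1)) := h1
  -- apply with i := iy, j := imax
  obtain ⟨imax, himax⟩ := exists_big_coord hn hxs
  have hreach := reach_univ hn A hwi iy imax
  have hb := main n iy imax hreach
  set g := ∑ s ∈ Finset.range n, (mm+1)^s with hgdef
  have e1 : (mm+1)^n = mm * g + 1 := (geom_id mm n).symm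
  rw [e1] at hb
  have e2 : y ^ (mm * g + 1) = y * (y ^ mm) ^ g := by
    rw [pow_succ, ← pow_mul]
    ring
  rw [e2] at hb
  have e3 : (c * y ^ mm) ^ g * x imax = (c ^ g * x imax) * (y ^ mm) ^ g := by
    rw [mul_pow]; ring
  rw [e3] at hb
  have hyg : (0:ℝ) < (y ^ mm) ^ g := by positivity
  have h4 : c ^ g * x imax ≤ y := le_of_mul_le_mul_right (by linarith [hb]) hyg
  have h5 : c ^ g * (1/(n:ℝ)) ≤ c ^ g * x imax :=
    mul_le_mul_of_nonneg_left himax (pow_nonneg hc0.le _)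
  intro j
  exact le_trans (le_trans h5 h4) (le_trans (by rw [hydef]) (hiy j))

lemma Fm_add_const (A : Fin n → (Fin m → Fin n) → ℝ) (e : ℝ) (x : Fin n → ℝ) (i : Fin n) :
    Fm (fun i' p => A i' p + e) x i
      = Fm A x i + e * ∑ p : Fin m → Fin n, ∏ j, x (p j) := by
  simp only [Fm, add_mul, Finset.sum_add_distrib, Finset.mul_sum]

lemma exists_pos_eigen_wi (hn : 1 ≤ n) {mm : ℕ} (A : Fin n → (Fin (mm+1) → Fin n) → ℝ)
    (hA : ∀ i p, 0 ≤ A i p)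
    (hwi : ∀ I : Finset (Fin n), I.Nonempty → I ≠ Finset.univ →
      ∃ i ∈ I, ∃ p : Fin (mm+1) → Fin n, 0 < A i p ∧ ∃ m0, p m0 ∉ I) :
    ∃ (μ : ℝ) (x : Fin n → ℝ), 0 ≤ μ ∧ (∀ i, 0 < x i) ∧
      ∀ i, Fm A x i = μ * x i ^ (mm+1) := by
  haveI : NeZero n := ⟨by omega⟩
  by_cases hE : ∃ q : Fin n × (Fin (mm+1) → Fin n), 0 < A q.1 q.2
  swap
  · -- A is identically zero
    push_neg at hE
    have hz : ∀ i p, A i p = 0 := fun i p => le_antisymm (hE (i, p)) (hA i p)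
    refine ⟨0, fun _ => 1, le_refl 0, fun _ => one_pos, fun i => ?_⟩
    simp [Fm, hz]
  -- setup constants
  obtain ⟨q0, hq0⟩ := hE
  set Pset : Finset (Fin n × (Fin (mm+1) → Fin n)) :=
    Finset.univ.filter (fun q => 0 < A q.1 q.2) with hPdef
  have hPne : Pset.Nonempty := ⟨q0, by rw [hPdef, Finset.mem_filter]; exact ⟨Finset.mem_univ _, hq0⟩⟩
  set a0 : ℝ := (Pset.image (fun q => A q.1 q.2)).min' (hPne.image _) with ha0def
  have ha0le : ∀ i p, 0 < A i p → a0 ≤ A i p := fun i p hp =>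
    Finset.min'_le _ _ (Finset.mem_image.2 ⟨(i, p), by
      rw [hPdef, Finset.mem_filter]; exact ⟨Finset.mem_univ _, hp⟩, rfl⟩)
  have ha0pos : 0 < a0 := by
    obtain ⟨q, hq, hq'⟩ := Finset.mem_image.1 (Finset.min'_mem _ (hPne.image (fun q => A q.1 q.2)))
    rw [hPdef, Finset.mem_filter] at hq
    rw [ha0def, ← hq']
    exact hq.2
  set CC : ℝ := ∑ i, ∑ p : Fin (mm+1) → Fin n, A i p with hCCdef
  have hCC0 : 0 ≤ CC := Finset.sum_nonneg fun i _ => Finset.sum_nonneg fun p _ => hA i p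
  set D : ℝ := (n : ℝ) * (n : ℝ) ^ (mm+1) with hDdef
  have hD0 : 0 < D := by positivity
  set B₁ : ℝ := (n : ℝ) ^ (mm+1) * (CC + D) with hB₁def
  have hB₁pos : 0 < B₁ := by
    apply mul_pos (by positivity)
    linarith
  -- the perturbed eigenpairs
  have hex : ∀ t : ℕ, ∃ (μ : ℝ) (x : Fin n → ℝ), 0 ≤ μ ∧ (∀ i, 0 < x i) ∧ (∑ i, x i) = 1 ∧
      ∀ i, Fm (fun i' p => A i' p + 1/((t:ℝ)+1)) x i = μ * x i ^ (mm+1) :=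
    fun t => pos_eigen hn (by omega) _ (fun i p => by
      have : (0:ℝ) < 1/((t:ℝ)+1) := by positivity
      linarith [hA i p])
  choose μs xs hμ0 hxpos hxsum heig using hex
  have hε0 : ∀ t : ℕ, (0:ℝ) < 1/((t:ℝ)+1) := fun t => by positivity
  have hε1 : ∀ t : ℕ, (1:ℝ)/((t:ℝ)+1) ≤ 1 := fun t => by
    rw [div_le_one (by positivity)]
    have : (0:ℝ) ≤ (t:ℝ) := Nat.cast_nonneg t
    linarith
  -- uniform upper bound on the eigenvalues
  have hμB : ∀ t, μs t ≤ B₁ := by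
    intro t
    have h1 := t_le_B hn (A := fun i' p => A i' p + 1/((t:ℝ)+1))
      (fun i p => by linarith [hA i p, hε0 t]) (hμ0 t) (fun j => (hxpos t j).le) (hxsum t)
      (fun i => le_of_eq (heig t i).symm)
    have h2 : (∑ i, ∑ p : Fin (mm+1) → Fin n, (A i p + 1/((t:ℝ)+1))) ≤ CC + D := by
      have : ∀ i : Fin n, (∑ p : Fin (mm+1) → Fin n, (A i p + 1/((t:ℝ)+1)))
          = (∑ p : Fin (mm+1) → Fin n, A i p) + (n:ℝ)^(mm+1) * (1/((t:ℝ)+1)) := by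
        intro i
        rw [Finset.sum_add_distrib, Finset.sum_const, Finset.card_univ, Fintype.card_fun,
          Fintype.card_fin, Fintype.card_fin, nsmul_eq_mul]
        push_cast
        ring
      rw [Finset.sum_congr rfl (fun i _ => this i), Finset.sum_add_distrib, Finset.sum_const,
        Finset.card_univ, Fintype.card_fin, nsmul_eq_mul, ← hCCdef]
      have : (n:ℝ) * ((n:ℝ)^(mm+1) * (1/((t:ℝ)+1))) ≤ D := by
        rw [hDdef]
        have h3 : (n:ℝ)^(mm+1) * (1/((t:ℝ)+1)) ≤ (n:ℝ)^(mm+1) * 1 :=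
          mul_le_mul_of_nonneg_left (hε1 t) (by positivity)
        have h4 : (0:ℝ) ≤ (n:ℝ) := Nat.cast_nonneg n
        nlinarith
      linarith
    calc μs t ≤ (n:ℝ)^(mm+1) * ∑ i, ∑ p : Fin (mm+1) → Fin n, (A i p + 1/((t:ℝ)+1)) := h1
      _ ≤ B₁ := by
        rw [hB₁def]
        exact mul_le_mul_of_nonneg_left h2 (by positivity)
  -- uniform lower bound on entries
  set c : ℝ := min (a0 / B₁) 1 with hcdef
  have hc0 : 0 < c := lt_min (by positivity) one_pos
  have hc1 : c ≤ 1 := min_le_right _ _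
  set g : ℕ := ∑ s ∈ Finset.range n, (mm+1)^s with hgdef
  set c' : ℝ := c ^ g * (1/(n:ℝ)) with hc'def
  have hc'0 : 0 < c' := by positivity
  have hlb : ∀ t j, c' ≤ xs t j := by
    intro t
    obtain ⟨iy, _, hiy⟩ := Finset.exists_min_image Finset.univ (xs t) ⟨⟨0, by omega⟩, Finset.mem_univ _⟩
    have hiy' : ∀ j, xs t iy ≤ xs t j := fun j => hiy j (Finset.mem_univ j)
    have hkey : ∀ i u, Edge A i u → c * xs t iy ^ mm * xs t u ≤ xs t i ^ (mm+1) := by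
      rintro i u ⟨p, hp, m0, rfl⟩
      have hterm : a0 * (xs t iy ^ mm * xs t (p m0)) ≤ Fm (fun i' p' => A i' p' + 1/((t:ℝ)+1)) (xs t) i := by
        have h1 : (A i p + 1/((t:ℝ)+1)) * ∏ l, xs t (p l)
            ≤ Fm (fun i' p' => A i' p' + 1/((t:ℝ)+1)) (xs t) i := by
          have := Finset.single_le_sum
            (f := fun p' : Fin (mm+1) → Fin n => (A i p' + 1/((t:ℝ)+1)) * ∏ l, xs t (p' l))
            (fun p' _ => mul_nonneg (by linarith [hA i p', hε0 t])
              (Finset.prod_nonneg fun _ _ => (hxpos t _).le))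
            (Finset.mem_univ p)
          exact this
        have h2 : a0 * (xs t iy ^ mm * xs t (p m0))
            ≤ (A i p + 1/((t:ℝ)+1)) * ∏ l, xs t (p l) := by
          apply mul_le_mul (by linarith [ha0le i p hp, hε0 t])
          · have := prod_lower (x := xs t) (y := xs t iy) (hxpos t iy).le hiy' p m0
            simpa using this
          · exact mul_nonneg (pow_nonneg (hxpos t iy).le mm) (hxpos t (p m0)).le
          · linarith [hA i p, hε0 t]
        linarith
      rw [heig t i] at hterm
      have hμpos : 0 < μs t := by
        have hpos : 0 < a0 * (xs t iy ^ mm * xs t (p m0)) :=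
          mul_pos ha0pos (mul_pos (pow_pos (hxpos t iy) mm) (hxpos t (p m0)))
        nlinarith [pow_pos (hxpos t i) (mm+1)]
      have h3 : c * xs t iy ^ mm * xs t (p m0) ≤ (a0 * (xs t iy ^ mm * xs t (p m0))) / B₁ := by
        rw [mul_assoc, ← div_mul_eq_mul_div]
        exact mul_le_mul_of_nonneg_right (min_le_left _ _)
          (mul_nonneg (pow_nonneg (hxpos t iy).le mm) (hxpos t (p m0)).le)
      have h4 : (a0 * (xs t iy ^ mm * xs t (p m0))) / B₁ ≤ (μs t * xs t i ^ (mm+1)) / B₁ :=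
        (div_le_div_iff_of_pos_right hB₁pos).2 hterm
      have h5 : (μs t * xs t i ^ (mm+1)) / B₁ ≤ xs t i ^ (mm+1) := by
        rw [mul_div_right_comm]
        calc μs t / B₁ * xs t i ^ (mm+1) ≤ 1 * xs t i ^ (mm+1) := by
              apply mul_le_mul_of_nonneg_right _ (pow_nonneg (hxpos t i).le _)
              rw [div_le_one hB₁pos]
              exact hμB t
          _ = xs t i ^ (mm+1) := one_mul _
      linarith
    have := min_entry_lb hn A hwi (hxpos t) (hxsum t) hc0 hc1 hiy' hkey
    intro j
    exact this j
  -- take a convergent subsequence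
  have hseq : ∀ t : ℕ, (μs t, xs t) ∈ Set.Icc ((0:ℝ), (fun _ => c' : Fin n → ℝ))
      (B₁, (fun _ => 1 : Fin n → ℝ)) := by
    intro t
    constructor
    · exact ⟨hμ0 t, fun i => hlb t i⟩
    · exact ⟨hμB t, fun i => coord_le_one (fun j => (hxpos t j).le) (hxsum t) i⟩
  obtain ⟨⟨μ, x⟩, hmem, φ, hφ, hconv⟩ := isCompact_Icc.tendsto_subseq hseq
  have hμ0' : 0 ≤ μ := hmem.1.1
  have hxpos' : ∀ i, 0 < x i := fun i => lt_of_lt_of_le hc'0 (hmem.1.2 i)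
  refine ⟨μ, x, hμ0', hxpos', fun i => ?_⟩
  -- pass the eigen equation to the limit
  have hμconv : Filter.Tendsto (fun t => μs (φ t)) Filter.atTop (nhds μ) :=
    (continuous_fst.tendsto _).comp hconv
  have hxconv : Filter.Tendsto (fun t => xs (φ t)) Filter.atTop (nhds x) :=
    (continuous_snd.tendsto _).comp hconv
  have hεconv : Filter.Tendsto (fun t => 1/((φ t : ℝ)+1)) Filter.atTop (nhds 0) :=
    tendsto_one_div_add_atTop_nhds_zero_nat.comp hφ.tendsto_atTop
  have hGcont : Continuous (fun z : Fin n → ℝ => ∑ p : Fin (mm+1) → Fin n, ∏ j, z (p j)) :=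
    continuous_finset_sum _ fun p _ => continuous_finset_prod _ fun j _ => continuous_apply (p j)
  have hLHS : Filter.Tendsto
      (fun t => Fm A (xs (φ t)) i + (1/((φ t : ℝ)+1)) * ∑ p : Fin (mm+1) → Fin n, ∏ j, xs (φ t) (p j))
      Filter.atTop (nhds (Fm A x i)) := by
    have h1 := ((Fm_continuous A i).tendsto x).comp hxconv
    have h2 := hεconv.mul ((hGcont.tendsto x).comp hxconv)
    have := h1.add h2
    simpa using this
  have hRHS : Filter.Tendsto (fun t => μs (φ t) * xs (φ t) i ^ (mm+1))
      Filter.atTop (nhds (μ * x i ^ (mm+1))) :=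
    hμconv.mul ((((continuous_apply i).tendsto x).comp hxconv).pow (mm+1))
  have heq : ∀ t, Fm A (xs (φ t)) i + (1/((φ t : ℝ)+1)) * ∑ p : Fin (mm+1) → Fin n, ∏ j, xs (φ t) (p j)
      = μs (φ t) * xs (φ t) i ^ (mm+1) := by
    intro t
    rw [← Fm_add_const]
    exact heig (φ t) i
  exact tendsto_nhds_unique (hLHS.congr heq) hRHS

lemma exists_pos_eigen_wi' (hn : 1 ≤ n) (hm : 1 ≤ m) (A : Fin n → (Fin m → Fin n) → ℝ)
    (hA : ∀ i p, 0 ≤ A i p)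
    (hwi : ∀ I : Finset (Fin n), I.Nonempty → I ≠ Finset.univ →
      ∃ i ∈ I, ∃ p : Fin m → Fin n, 0 < A i p ∧ ∃ m0, p m0 ∉ I) :
    ∃ (μ : ℝ) (x : Fin n → ℝ), 0 ≤ μ ∧ (∀ i, 0 < x i) ∧
      ∀ i, Fm A x i = μ * x i ^ m := by
  obtain ⟨mm, rfl⟩ : ∃ mm, m = mm + 1 := ⟨m - 1, by omega⟩
  exact exists_pos_eigen_wi hn A hA hwi

/-- Collatz–Wielandt type comparison: any sub-eigenvalue of a nonneg vector is
at most the eigenvalue of a positive eigenpair. -/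
lemma sub_cw (hm : 1 ≤ m) {A : Fin n → (Fin m → Fin n) → ℝ} (hA : ∀ i p, 0 ≤ A i p)
    {μ : ℝ} {x : Fin n → ℝ} (hx : ∀ i, 0 < x i) (heig : ∀ i, Fm A x i = μ * x i ^ m)
    {ν : ℝ} {w : Fin n → ℝ} (hw : ∀ i, 0 ≤ w i) (hw0 : ∃ j, 0 < w j)
    (hsub : ∀ i, ν * w i ^ m ≤ Fm A w i) : ν ≤ μ := by
  obtain ⟨j0, hj0⟩ := hw0
  obtain ⟨i0, _, hi0⟩ := Finset.exists_max_image Finset.univ (fun i => w i / x i)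
    ⟨j0, Finset.mem_univ _⟩
  set t := w i0 / x i0 with htdef
  have ht : 0 < t := lt_of_lt_of_le (div_pos hj0 (hx j0)) (hi0 j0 (Finset.mem_univ _))
  have hle : ∀ i, w i ≤ t * x i := fun i => by
    have h := hi0 i (Finset.mem_univ i)
    rw [div_le_iff₀ (hx i)] at h
    linarith
  have hwi0 : w i0 = t * x i0 := by
    rw [htdef, div_mul_cancel₀]
    exact ne_of_gt (hx i0)
  have hcalc : ν * w i0 ^ m ≤ μ * w i0 ^ m := by
    calc ν * w i0 ^ m ≤ Fm A w i0 := hsub i0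
      _ ≤ Fm A (fun l => t * x l) i0 := Fm_mono hA hw (fun l => hle l) i0
      _ = t ^ m * Fm A x i0 := Fm_smul x t i0
      _ = t ^ m * (μ * x i0 ^ m) := by rw [heig i0]
      _ = μ * (t * x i0) ^ m := by rw [mul_pow]; ring
      _ = μ * w i0 ^ m := by rw [← hwi0]
  have hwpos : 0 < w i0 ^ m := pow_pos (by rw [hwi0]; exact mul_pos ht (hx i0)) m
  exact le_of_mul_le_mul_right hcalc hwpos

lemma eig_unique (hn : 1 ≤ n) (hm : 1 ≤ m) {A : Fin n → (Fin m → Fin n) → ℝ}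
    (hA : ∀ i p, 0 ≤ A i p)
    (hwi : ∀ I : Finset (Fin n), I.Nonempty → I ≠ Finset.univ →
      ∃ i ∈ I, ∃ p : Fin m → Fin n, 0 < A i p ∧ ∃ m0, p m0 ∉ I)
    {μ : ℝ} {x : Fin n → ℝ} (hx : ∀ i, 0 < x i) (heig : ∀ i, Fm A x i = μ * x i ^ m)
    {ν : ℝ} {y : Fin n → ℝ} (hy : ∀ i, 0 < y i) (heig2 : ∀ i, Fm A y i = ν * y i ^ m) :
    ν = μ ∧ ∃ c : ℝ, 0 < c ∧ ∀ i, y i = c * x i := by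
  have hνμ : ν = μ := le_antisymm
    (sub_cw hm hA hx heig (fun i => (hy i).le) ⟨⟨0, by omega⟩, hy _⟩
      (fun i => le_of_eq (heig2 i).symm))
    (sub_cw hm hA hy heig2 (fun i => (hx i).le) ⟨⟨0, by omega⟩, hx _⟩
      (fun i => le_of_eq (heig i).symm))
  refine ⟨hνμ, ?_⟩
  obtain ⟨i1, _, hi1⟩ := Finset.exists_min_image Finset.univ (fun i => y i / x i)
    ⟨⟨0, by omega⟩, Finset.mem_univ _⟩
  set c := y i1 / x i1 with hcdef
  have hc0 : 0 < c := div_pos (hy i1) (hx i1)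
  have hcx : ∀ i, c * x i ≤ y i := fun i => by
    have h := hi1 i (Finset.mem_univ i)
    rw [le_div_iff₀ (hx i)] at h
    linarith
  refine ⟨c, hc0, ?_⟩
  set J : Finset (Fin n) := Finset.univ.filter (fun i => y i = c * x i) with hJdef
  have hi1J : i1 ∈ J := by
    rw [hJdef, Finset.mem_filter]
    exact ⟨Finset.mem_univ _, by rw [hcdef, div_mul_cancel₀ _ (ne_of_gt (hx i1))]⟩
  have hJuniv : J = Finset.univ := by
    by_contra hne
    obtain ⟨i, hiJ, p, hp, m0, hm0⟩ := hwi J ⟨i1, hi1J⟩ hne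
    rw [hJdef, Finset.mem_filter] at hiJ
    have hyi : y i = c * x i := hiJ.2
    have hFeq : (∑ p' : Fin m → Fin n, A i p' * ∏ l, (c * x (p' l)))
        = ∑ p' : Fin m → Fin n, A i p' * ∏ l, y (p' l) := by
      have h1 : Fm A (fun l => c * x l) i = Fm A y i := by
        rw [heig2 i, Fm_smul, heig i, hνμ, hyi, mul_pow]
        ring
      simpa only [Fm] using h1
    have hmono : ∀ p' ∈ (Finset.univ : Finset (Fin m → Fin n)),
        A i p' * ∏ l, (c * x (p' l)) ≤ A i p' * ∏ l, y (p' l) := fun p' _ =>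
      mul_le_mul_of_nonneg_left
        (Finset.prod_le_prod (fun l _ => (mul_pos hc0 (hx _)).le) (fun l _ => hcx _)) (hA i p')
    have hall := (Finset.sum_eq_sum_iff_of_le hmono).1 hFeq
    have heqp := hall p (Finset.mem_univ p)
    have hprod : (∏ l, (c * x (p l))) = ∏ l, y (p l) :=
      mul_left_cancel₀ (ne_of_gt hp) heqp
    have hm0' : y (p m0) ≠ c * x (p m0) := by
      intro hcontra
      apply hm0
      rw [hJdef, Finset.mem_filter]
      exact ⟨Finset.mem_univ _, hcontra⟩
    have hstrictf : c * x (p m0) < y (p m0) := lt_of_le_of_ne (hcx _) (Ne.symm hm0')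
    have hstrict : (∏ l, (c * x (p l))) < ∏ l, y (p l) :=
      Finset.prod_lt_prod (fun l _ => mul_pos hc0 (hx _)) (fun l _ => hcx _)
        ⟨m0, Finset.mem_univ m0, hstrictf⟩
    rw [hprod] at hstrict
    exact lt_irrefl _ hstrict
  intro i
  have : i ∈ J := hJuniv ▸ Finset.mem_univ i
  rw [hJdef, Finset.mem_filter] at this
  exact this.2

end PF

lemma specRad_eq_aux (n k : ℕ) (hn : 1 ≤ n) (hk : 2 ≤ k)
    (A : Fin n → (Fin (k-1) → Fin n) → ℝ) (hA : ∀ i p, 0 ≤ A i p)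
    {μ : ℝ} {x : Fin n → ℝ} (hμ0 : 0 ≤ μ) (hx : ∀ i, 0 < x i)
    (heig : ∀ i, PF.Fm A x i = μ * x i ^ (k-1)) :
    specRad n k (fun i p => (A i p : ℂ)) = μ := by
  have hm : 1 ≤ k - 1 := by omega
  set R : Set ℝ := {r : ℝ | ∃ lam : ℂ,
    IsTensorEigenvalue n k (fun i p => (A i p : ℂ)) lam ∧ ‖lam‖ = r} with hRdef
  have hμmem : μ ∈ R := by
    refine ⟨(μ : ℂ), ⟨fun i => (x i : ℂ), ?_, fun i => ?_⟩, ?_⟩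
    · intro h
      have h0 := congr_fun h ⟨0, by omega⟩
      simp only [Pi.zero_apply, Complex.ofReal_eq_zero] at h0
      exact ne_of_gt (hx _) h0
    · have h := heig i
      simp only [PF.Fm] at h
      show (∑ p : Fin (k-1) → Fin n, ((A i p : ℂ)) * ∏ l, (x (p l) : ℂ))
          = (μ : ℂ) * (x i : ℂ) ^ (k-1)
      exact_mod_cast h
    · rw [Complex.norm_real, Real.norm_eq_abs, abs_of_nonneg hμ0]
  have hub : ∀ r ∈ R, r ≤ μ := by
    rintro r ⟨lam, ⟨z, hz0, hzeq⟩, rfl⟩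
    set w : Fin n → ℝ := fun i => ‖z i‖ with hwdef
    have hw : ∀ i, 0 ≤ w i := fun i => norm_nonneg _
    have hw0 : ∃ j, 0 < w j := by
      obtain ⟨j, hj⟩ := Function.ne_iff.1 hz0
      exact ⟨j, by simpa [hwdef] using (norm_pos_iff.mpr hj)⟩
    have hsub : ∀ i, ‖lam‖ * w i ^ (k-1) ≤ PF.Fm A w i := by
      intro i
      have h1 : ‖lam‖ * w i ^ (k-1) = ‖lam * z i ^ (k-1)‖ := by
        rw [norm_mul, norm_pow]
      rw [h1, ← hzeq i]
      calc ‖∑ p : Fin (k-1) → Fin n, (A i p : ℂ) * ∏ l, z (p l)‖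
          ≤ ∑ p : Fin (k-1) → Fin n, ‖(A i p : ℂ) * ∏ l, z (p l)‖ :=
            norm_sum_le _ _
        _ = PF.Fm A w i := by
            refine Finset.sum_congr rfl fun p _ => ?_
            rw [norm_mul, norm_prod, Complex.norm_real, Real.norm_eq_abs, abs_of_nonneg (hA i p)]
    exact PF.sub_cw hm hA hx heig hw hw0 hsub
  have hbdd : BddAbove R := ⟨μ, fun r hr => hub r hr⟩
  show sSup R = μ
  exact le_antisymm (csSup_le ⟨μ, hμmem⟩ hub) (le_csSup hbdd hμmem)


/-- Perron–Frobenius for nonnegative weakly irreducible tensors: the spectral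
radius is an eigenvalue with a strictly positive eigenvector, and this is the
unique eigenvalue admitting a positive eigenvector, the eigenvector being unique
up to positive scaling. -/
theorem perron_frobenius_tensor (n k : ℕ) (hn : 1 ≤ n) (hk : 2 ≤ k)
    (A : Fin n → (Fin (k - 1) → Fin n) → ℝ)
    (hnn : ∀ i p, 0 ≤ A i p)
    (hwi : ∀ I : Finset (Fin n), I.Nonempty → I ≠ Finset.univ →
      ∃ i ∈ I, ∃ p : Fin (k - 1) → Fin n, 0 < A i p ∧ ∃ m, p m ∉ I) :
    ∃ x : Fin n → ℝ, (∀ i, 0 < x i) ∧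
      (∀ i, (∑ p : Fin (k - 1) → Fin n, A i p * ∏ m, x (p m))
        = specRad n k (fun i p => (A i p : ℂ)) * x i ^ (k - 1)) ∧
      ∀ (y : Fin n → ℝ) (mu : ℝ), (∀ i, 0 < y i) →
        (∀ i, (∑ p : Fin (k - 1) → Fin n, A i p * ∏ m, y (p m))
          = mu * y i ^ (k - 1)) →
        mu = specRad n k (fun i p => (A i p : ℂ)) ∧ ∃ c : ℝ, 0 < c ∧ y = c • x := by
  have hm : 1 ≤ k - 1 := by omega
  obtain ⟨μ, x, hμ0, hxpos, heig⟩ := PF.exists_pos_eigen_wi' hn hm A hnn hwi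
  have hspec : specRad n k (fun i p => (A i p : ℂ)) = μ :=
    specRad_eq_aux n k hn hk A hnn hμ0 hxpos heig
  refine ⟨x, hxpos, fun i => ?_, fun y mu hy hyeig => ?_⟩
  · rw [hspec]
    simpa only [PF.Fm] using heig i
  · have hyeig' : ∀ i, PF.Fm A y i = mu * y i ^ (k-1) := fun i => by
      simpa only [PF.Fm] using hyeig i
    obtain ⟨hνμ, c, hc0, hcx⟩ := PF.eig_unique hn hm hnn hwi hxpos heig hy hyeig'
    refine ⟨by rw [hspec, hνμ], c, hc0, funext fun i => ?_⟩
    simp [hcx i]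
end
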